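/- arXiv:1808.08365 — 6 statements merged into one kernel-verified Lean document; each statement's English description precedes it below -/
import Mathlib

section
/- Let α ∈ (0,1) and let n ≥ 2 be an integer. Let ℰ0, ℰ1 : [0,1) → ℂ satisfy the data assumptions with this α, and let m1 = lim_{x↓0} x^α ℰ0'(x) and m2 = lim_{y↓0} y^α ℰ1'(y). If ℰ is a C^n-solution of the Goursat problem for the hyperbolic Ernst equation in D with data {ℰ0, ℰ1} (with the same exponent α in the solution's regularity condition), then for each y ∈ [0,1): lim_{x↓0} x^α ℰ_x(x,y) = m1 · exp(i ∫_0^y (Im ℰ1'(y')/Re ℰ1(y')) dy') · Re ℰ1(y) / √(1−y), and for each x ∈ [0,1): lim_{y↓0} y^α ℰ_y(x,y) = m2 · exp(i ∫_0^x (Im ℰ0'(x')/Re ℰ0(x')) dx') · Re ℰ0(x) / √(1−x). In particular, lim_{x↓0} x^α |ℰ_x(x,y)| = |m1| Re ℰ1(y)/√(1−y) and lim_{y↓0} y^α |ℰ_y(x,y)| = |m2| Re ℰ0(x)/√(1−x). -/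
open Complex Set MeasureTheory Topology Filter ComplexConjugate

noncomputable section

/-- The triangle `D = {(x,y) : 0 ≤ x, 0 ≤ y, x + y < 1}`. -/
def TriD : Set (ℝ × ℝ) := {p | 0 ≤ p.1 ∧ 0 ≤ p.2 ∧ p.1 + p.2 < 1}

/-- Partial derivative in the first variable. -/
def pdx (f : ℝ → ℝ → ℂ) (x y : ℝ) : ℂ := deriv (fun t => f t y) x

/-- Partial derivative in the second variable. -/
def pdy (f : ℝ → ℝ → ℂ) (x y : ℝ) : ℂ := deriv (fun t => f x t) y

/-- Mixed second partial derivative. -/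
def pdxy (f : ℝ → ℝ → ℂ) (x y : ℝ) : ℂ := pdx (fun a b => pdy f a b) x y

/-- Partial derivative in the first variable (real valued). -/
def pdxR (f : ℝ → ℝ → ℝ) (x y : ℝ) : ℝ := deriv (fun t => f t y) x

/-- Partial derivative in the second variable (real valued). -/
def pdyR (f : ℝ → ℝ → ℝ) (x y : ℝ) : ℝ := deriv (fun t => f x t) y

/-- Mixed second partial derivative (real valued). -/
def pdxyR (f : ℝ → ℝ → ℝ) (x y : ℝ) : ℝ := pdxR (fun a b => pdyR f a b) x y

/-- The hyperbolic Ernst equation at a point. -/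
def ErnstEqAt (E : ℝ → ℝ → ℂ) (x y : ℝ) : Prop :=
  (((E x y).re : ℂ)) * (pdxy E x y - (pdx E x y + pdy E x y) / (2 * (1 - x - y))) =
    pdx E x y * pdy E x y

/-- The Euler–Darboux equation at a point. -/
def EulerDarbouxAt (V : ℝ → ℝ → ℝ) (x y : ℝ) : Prop :=
  pdxyR V x y - (pdxR V x y + pdyR V x y) / (2 * (1 - x - y)) = 0

/-- `λ(x,y,k) = √((k-(1-y))/(k-x))`, principal branch (`Re λ > 0` off the cut). -/
def lam (x y : ℝ) (k : ℂ) : ℂ := ((k - (1 - (y : ℂ))) / (k - (x : ℂ))) ^ (1/2 : ℂ)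

/-- The segment `[0,1]` inside `ℂ`. -/
def seg01 : Set ℂ := (fun t : ℝ => (t : ℂ)) '' Icc 0 1

/-- A `C^n`-solution of the Goursat problem for the hyperbolic Ernst equation in `D`
with data `{E0, E1}`, with regularity exponent `α`. -/
def ErnstSolutionWith (n : ℕ) (α : ℝ) (E : ℝ → ℝ → ℂ) (E0 E1 : ℝ → ℂ) : Prop :=
  ContinuousOn (fun p : ℝ × ℝ => E p.1 p.2) TriD ∧
  ContDiffOn ℝ n (fun p : ℝ × ℝ => E p.1 p.2) (interior TriD) ∧
  (∀ p ∈ interior TriD, ErnstEqAt E p.1 p.2) ∧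
  (∃ g : ℝ × ℝ → ℂ, ContinuousOn g TriD ∧
      ∀ p ∈ interior TriD, g p = ((p.1 ^ α : ℝ) : ℂ) * pdx E p.1 p.2) ∧
  (∃ g : ℝ × ℝ → ℂ, ContinuousOn g TriD ∧
      ∀ p ∈ interior TriD, g p = ((p.2 ^ α : ℝ) : ℂ) * pdy E p.1 p.2) ∧
  (∃ g : ℝ × ℝ → ℂ, ContinuousOn g TriD ∧
      ∀ p ∈ interior TriD, g p = ((p.1 ^ α * p.2 ^ α : ℝ) : ℂ) * pdxy E p.1 p.2) ∧
  (∀ x ∈ Ico (0:ℝ) 1, E x 0 = E0 x) ∧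
  (∀ y ∈ Ico (0:ℝ) 1, E 0 y = E1 y) ∧
  (∀ p ∈ TriD, 0 < (E p.1 p.2).re)

/-- A `C^n`-solution of the Goursat problem for the hyperbolic Ernst equation in `D`
(with regularity exponent `α` existentially quantified over `[0,1)`). -/
def ErnstSolution (n : ℕ) (E : ℝ → ℝ → ℂ) (E0 E1 : ℝ → ℂ) : Prop :=
  ∃ α ∈ Ico (0:ℝ) 1, ErnstSolutionWith n α E E0 E1

/-- A `C^n`-solution of the Goursat problem for the Euler–Darboux equation in `D`
with data `{V0, V1}`, with regularity exponent `α`. -/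
def EDSolutionWith (n : ℕ) (α : ℝ) (V : ℝ → ℝ → ℝ) (V0 V1 : ℝ → ℝ) : Prop :=
  ContinuousOn (fun p : ℝ × ℝ => V p.1 p.2) TriD ∧
  ContDiffOn ℝ n (fun p : ℝ × ℝ => V p.1 p.2) (interior TriD) ∧
  (∀ p ∈ interior TriD, EulerDarbouxAt V p.1 p.2) ∧
  (∃ g : ℝ × ℝ → ℝ, ContinuousOn g TriD ∧
      ∀ p ∈ interior TriD, g p = p.1 ^ α * pdxR V p.1 p.2) ∧
  (∃ g : ℝ × ℝ → ℝ, ContinuousOn g TriD ∧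
      ∀ p ∈ interior TriD, g p = p.2 ^ α * pdyR V p.1 p.2) ∧
  (∃ g : ℝ × ℝ → ℝ, ContinuousOn g TriD ∧
      ∀ p ∈ interior TriD, g p = p.1 ^ α * p.2 ^ α * pdxyR V p.1 p.2) ∧
  (∀ x ∈ Ico (0:ℝ) 1, V x 0 = V0 x) ∧
  (∀ y ∈ Ico (0:ℝ) 1, V 0 y = V1 y)

/-- A `C^n`-solution of the Goursat problem for the Euler–Darboux equation in `D`. -/
def EDSolution (n : ℕ) (V : ℝ → ℝ → ℝ) (V0 V1 : ℝ → ℝ) : Prop :=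
  ∃ α ∈ Ico (0:ℝ) 1, EDSolutionWith n α V V0 V1

/-- The data assumptions (1.5) on a single boundary datum for the Ernst equation. -/
def ErnstData (n : ℕ) (α : ℝ) (E0 : ℝ → ℂ) : Prop :=
  ContinuousOn E0 (Ico 0 1) ∧ ContDiffOn ℝ n E0 (Ioo 0 1) ∧
  (∃ g : ℝ → ℂ, ContinuousOn g (Ico 0 1) ∧
      ∀ x ∈ Ioo (0:ℝ) 1, g x = ((x ^ α : ℝ) : ℂ) * deriv E0 x) ∧
  E0 0 = 1 ∧ (∀ x ∈ Ico (0:ℝ) 1, 0 < (E0 x).re)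

/-- The data assumptions on a single boundary datum for the Euler–Darboux equation. -/
def EDData (n : ℕ) (α : ℝ) (V0 : ℝ → ℝ) : Prop :=
  ContinuousOn V0 (Ico 0 1) ∧ ContDiffOn ℝ n V0 (Ioo 0 1) ∧
  (∃ g : ℝ → ℝ, ContinuousOn g (Ico 0 1) ∧
      ∀ x ∈ Ioo (0:ℝ) 1, g x = x ^ α * deriv V0 x) ∧
  V0 0 = 0

/-- The matrix `U0(x,k)` of the x-part of the Lax pair, built from the boundary datum. -/
def U0mat (E0 : ℝ → ℂ) (x : ℝ) (k : ℂ) : Matrix (Fin 2) (Fin 2) ℂ :=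
  (1 / (2 * ((E0 x).re : ℂ))) •
    !![conj (deriv E0 x), lam x 0 k * conj (deriv E0 x);
       lam x 0 k * deriv E0 x, deriv E0 x]

/-- The matrix `U(x,y,k)` of the Lax pair. -/
def Umat (E : ℝ → ℝ → ℂ) (k : ℂ) (x y : ℝ) : Matrix (Fin 2) (Fin 2) ℂ :=
  (1 / (2 * ((E x y).re : ℂ))) •
    !![conj (pdx E x y), lam x y k * conj (pdx E x y);
       lam x y k * pdx E x y, pdx E x y]

/-- The matrix `V(x,y,k)` of the Lax pair. -/
def Vmat (E : ℝ → ℝ → ℂ) (k : ℂ) (x y : ℝ) : Matrix (Fin 2) (Fin 2) ℂ :=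
  (1 / (2 * ((E x y).re : ℂ))) •
    !![conj (pdy E x y), (lam x y k)⁻¹ * conj (pdy E x y);
       (lam x y k)⁻¹ * pdy E x y, pdy E x y]



namespace ErnstAux

lemma isOpen_intTriD : IsOpen {p : ℝ × ℝ | 0 < p.1 ∧ 0 < p.2 ∧ p.1 + p.2 < 1} := by
  have h1 : IsOpen {p : ℝ × ℝ | 0 < p.1} := isOpen_lt continuous_const continuous_fst
  have h2 : IsOpen {p : ℝ × ℝ | 0 < p.2} := isOpen_lt continuous_const continuous_snd
  have h3 : IsOpen {p : ℝ × ℝ | p.1 + p.2 < 1} :=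
    isOpen_lt (continuous_fst.add continuous_snd) continuous_const
  exact (h1.inter (h2.inter h3))

lemma triD_interior : interior TriD = {p : ℝ × ℝ | 0 < p.1 ∧ 0 < p.2 ∧ p.1 + p.2 < 1} := by
  apply subset_antisymm
  · intro p hp
    have hmem : TriD ∈ 𝓝 p := mem_interior_iff_mem_nhds.1 hp
    have hpD : p ∈ TriD := mem_of_mem_nhds hmem
    have h1 : 0 < p.1 := by
      rcases lt_or_eq_of_le hpD.1 with h | h
      · exact h
      · exfalso
        have hc : Continuous (fun t : ℝ => ((p.1 - t, p.2) : ℝ × ℝ)) :=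
          (continuous_const.sub continuous_id).prodMk continuous_const
        have ht : Tendsto (fun t : ℝ => ((p.1 - t, p.2) : ℝ × ℝ)) (𝓝[>] (0:ℝ)) (𝓝 p) := by
          apply Tendsto.mono_left ?_ nhdsWithin_le_nhds
          simpa using hc.tendsto (0:ℝ)
        have hev : ∀ᶠ t in 𝓝[>] (0:ℝ), ((p.1 - t, p.2) : ℝ × ℝ) ∈ TriD := ht.eventually hmem
        obtain ⟨t, htD, ht0⟩ := (hev.and self_mem_nhdsWithin).exists
        have : (0:ℝ) ≤ p.1 - t := htD.1
        rw [← h] at this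
        linarith [ht0]
    have h2 : 0 < p.2 := by
      rcases lt_or_eq_of_le hpD.2.1 with h | h
      · exact h
      · exfalso
        have hc : Continuous (fun t : ℝ => ((p.1, p.2 - t) : ℝ × ℝ)) :=
          continuous_const.prodMk (continuous_const.sub continuous_id)
        have ht : Tendsto (fun t : ℝ => ((p.1, p.2 - t) : ℝ × ℝ)) (𝓝[>] (0:ℝ)) (𝓝 p) := by
          apply Tendsto.mono_left ?_ nhdsWithin_le_nhds
          simpa using hc.tendsto (0:ℝ)
        have hev : ∀ᶠ t in 𝓝[>] (0:ℝ), ((p.1, p.2 - t) : ℝ × ℝ) ∈ TriD := ht.eventually hmem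
        obtain ⟨t, htD, ht0⟩ := (hev.and self_mem_nhdsWithin).exists
        have : (0:ℝ) ≤ p.2 - t := htD.2.1
        rw [← h] at this
        linarith [ht0]
    exact ⟨h1, h2, hpD.2.2⟩
  · exact interior_maximal (fun p hp => ⟨hp.1.le, hp.2.1.le, hp.2.2⟩) isOpen_intTriD

lemma mem_intTriD {x y : ℝ} (hx : 0 < x) (hy : 0 < y) (hxy : x + y < 1) :
    ((x, y) : ℝ × ℝ) ∈ interior TriD := by
  rw [triD_interior]; exact ⟨hx, hy, hxy⟩

lemma intTriD_sub {p : ℝ × ℝ} (hp : p ∈ interior TriD) :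
    0 < p.1 ∧ 0 < p.2 ∧ p.1 + p.2 < 1 := by rwa [triD_interior] at hp

lemma swap_TriD {p : ℝ × ℝ} (hp : p ∈ TriD) : p.swap ∈ TriD := by
  exact ⟨hp.2.1, hp.1, by simpa [add_comm] using hp.2.2⟩

lemma swap_intTriD {p : ℝ × ℝ} (hp : p ∈ interior TriD) : p.swap ∈ interior TriD := by
  rw [triD_interior] at hp ⊢
  exact ⟨hp.2.1, hp.1, by simpa [add_comm] using hp.2.2⟩

end ErnstAux

section Slices
variable {𝔼 : Type*} [TopologicalSpace 𝔼]

lemma ErnstAux.tendsto_slice1 {g : ℝ × ℝ → 𝔼} (hg : ContinuousOn g TriD) {y : ℝ}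
    (hy : y ∈ Ico (0:ℝ) 1) :
    Tendsto (fun x : ℝ => g (x, y)) (𝓝[>] 0) (𝓝 (g (0, y))) := by
  have h0 : ((0:ℝ), y) ∈ TriD := ⟨le_refl _, hy.1, by simpa using hy.2⟩
  have hc : ContinuousWithinAt g TriD (0, y) := hg _ h0
  apply hc.tendsto.comp
  rw [tendsto_nhdsWithin_iff]
  constructor
  · apply Tendsto.mono_left ?_ nhdsWithin_le_nhds
    simpa using ((continuous_id.prodMk continuous_const).tendsto (0:ℝ))
  · filter_upwards [Ioo_mem_nhdsGT_of_mem
      (show (0:ℝ) ∈ Ico (0:ℝ) (1 - y) from ⟨le_refl 0, by linarith [hy.2]⟩)]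
      with x hx
    exact ⟨hx.1.le, hy.1, by linarith [hx.2]⟩

lemma ErnstAux.tendsto_slice2 {g : ℝ × ℝ → 𝔼} (hg : ContinuousOn g TriD) {x : ℝ}
    (hx : x ∈ Ico (0:ℝ) 1) :
    Tendsto (fun y : ℝ => g (x, y)) (𝓝[>] 0) (𝓝 (g (x, 0))) := by
  have : ContinuousOn (fun p : ℝ × ℝ => g p.swap) TriD := by
    apply hg.comp continuous_swap.continuousOn
    intro p hp; exact ErnstAux.swap_TriD hp
  simpa using ErnstAux.tendsto_slice1 this hx

end Slices

namespace ErnstAux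

lemma intInt_rpow_bound {𝔼 : Type*} [NormedAddCommGroup 𝔼] {α b C : ℝ} (hα : α < 1)
    (hb : 0 ≤ b) {f : ℝ → 𝔼} (hf : ContinuousOn f (Ioc 0 b))
    (hC : ∀ t ∈ Ioc (0:ℝ) b, ‖f t‖ ≤ C * t ^ (-α)) :
    IntervalIntegrable f volume 0 b := by
  have hdom : IntervalIntegrable (fun t : ℝ => C * t ^ (-α)) volume 0 b :=
    (intervalIntegral.intervalIntegrable_rpow' (by linarith)).const_mul C
  have hIoc : uIoc (0:ℝ) b = Ioc 0 b := uIoc_of_le hb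
  apply hdom.mono_fun
  · rw [hIoc]; exact hf.aestronglyMeasurable measurableSet_Ioc
  · rw [hIoc, Filter.EventuallyLE, ae_restrict_iff' measurableSet_Ioc]
    filter_upwards with t ht
    exact (hC t ht).trans (le_abs_self _)

lemma rpow_cancel {t : ℝ} (ht : 0 < t) (α : ℝ) :
    ((t ^ (-α) : ℝ) : ℂ) * ((t ^ α : ℝ) : ℂ) = 1 := by
  rw [← Complex.ofReal_mul, ← Real.rpow_add ht]
  simp

lemma contOn_rpow_neg {α : ℝ} {s : Set ℝ} (hs : ∀ t ∈ s, (0:ℝ) < t) :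
    ContinuousOn (fun t : ℝ => t ^ (-α)) s := by
  intro t ht
  exact (Real.continuousAt_rpow_const t (-α) (Or.inl (ne_of_gt (hs t ht)))).continuousWithinAt

end ErnstAux


namespace ErnstAux

/-- Slice continuity: `t ↦ g (x, t)` on a subset of the triangle. -/
lemma contOn_slice2 {𝔼 : Type*} [TopologicalSpace 𝔼] {g : ℝ × ℝ → 𝔼}
    (hg : ContinuousOn g TriD) {x : ℝ} {s : Set ℝ}
    (hs : ∀ t ∈ s, ((x, t) : ℝ × ℝ) ∈ TriD) :
    ContinuousOn (fun t : ℝ => g (x, t)) s :=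
  hg.comp ((continuous_const.prodMk continuous_id).continuousOn) hs

lemma contOn_slice1 {𝔼 : Type*} [TopologicalSpace 𝔼] {g : ℝ × ℝ → 𝔼}
    (hg : ContinuousOn g TriD) {y : ℝ} {s : Set ℝ}
    (hs : ∀ t ∈ s, ((t, y) : ℝ × ℝ) ∈ TriD) :
    ContinuousOn (fun t : ℝ => g (t, y)) s :=
  hg.comp ((continuous_id.prodMk continuous_const).continuousOn) hs

lemma boundary_deriv {α : ℝ} (hα : α ∈ Ioo (0:ℝ) 1) {E : ℝ → ℝ → ℂ} {g2 : ℝ × ℝ → ℂ}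
    (hEc : ContinuousOn (fun p : ℝ × ℝ => E p.1 p.2) TriD)
    (hdy : ∀ p ∈ interior TriD, HasDerivAt (fun t => E p.1 t) (pdy E p.1 p.2) p.2)
    (hg2 : ContinuousOn g2 TriD)
    (hg2e : ∀ p ∈ interior TriD, g2 p = ((p.2 ^ α : ℝ) : ℂ) * pdy E p.1 p.2) :
    ∀ y ∈ Ioo (0:ℝ) 1, HasDerivAt (fun t => E 0 t) (((y ^ (-α) : ℝ) : ℂ) * g2 (0, y)) y := by
  have key : ∀ b ∈ Ico (0:ℝ) 1,
      E 0 b - E 0 0 = ∫ t in (0:ℝ)..b, ((t ^ (-α) : ℝ) : ℂ) * g2 (0, t) := by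
    intro b hb
    set x0 : ℝ := (1 - b) / 2 with hx0
    have hx0pos : 0 < x0 := by simp only [hx0]; linarith [hb.2]
    have hKsub : (Icc 0 x0 ×ˢ Icc 0 b : Set (ℝ × ℝ)) ⊆ TriD := by
      rintro ⟨u, v⟩ ⟨hu, hv⟩
      simp only [mem_Icc] at hu hv
      exact ⟨hu.1, hv.1, by simp only [hx0] at hu; linarith [hu.2, hv.2, hb.2]⟩
    obtain ⟨C, hC⟩ := (isCompact_Icc.prod isCompact_Icc).exists_bound_of_continuousOn
      (hg2.mono hKsub)
    have hbound : ∀ x ∈ Icc (0:ℝ) x0, ∀ t ∈ Ioc (0:ℝ) b,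
        ‖((t ^ (-α) : ℝ) : ℂ) * g2 (x, t)‖ ≤ C * t ^ (-α) := by
      intro x hx t ht
      have h1 : ‖((t ^ (-α) : ℝ) : ℂ) * g2 (x, t)‖ = t ^ (-α) * ‖g2 (x, t)‖ := by
        rw [norm_mul, Complex.norm_real, Real.norm_eq_abs,
          _root_.abs_of_nonneg (Real.rpow_nonneg ht.1.le _)]
      rw [h1, mul_comm C]
      exact mul_le_mul_of_nonneg_left
        (hC (x, t) ⟨hx, ⟨ht.1.le, ht.2⟩⟩) (Real.rpow_nonneg ht.1.le _)
    have hslicecont : ∀ x ∈ Icc (0:ℝ) x0,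
        ContinuousOn (fun t : ℝ => ((t ^ (-α) : ℝ) : ℂ) * g2 (x, t)) (Ioc 0 b) := by
      intro x hx
      apply ContinuousOn.mul
      · exact Complex.continuous_ofReal.comp_continuousOn (contOn_rpow_neg (fun t ht => ht.1))
      · apply contOn_slice2 hg2
        intro t ht
        exact hKsub ⟨hx, ⟨ht.1.le, ht.2⟩⟩
    have hident : ∀ x ∈ Ioc (0:ℝ) x0,
        (∫ t in (0:ℝ)..b, ((t ^ (-α) : ℝ) : ℂ) * g2 (x, t)) = E x b - E x 0 := by
      intro x hx
      have hxx0 : x ≤ x0 := hx.2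
      apply intervalIntegral.integral_eq_sub_of_hasDeriv_right_of_le hb.1
      · apply contOn_slice2 hEc
        intro t ht
        exact hKsub ⟨⟨hx.1.le, hx.2⟩, ⟨ht.1, ht.2⟩⟩
      · intro t ht
        have hmem : ((x, t) : ℝ × ℝ) ∈ interior TriD := by
          apply mem_intTriD hx.1 ht.1
          rw [hx0] at hxx0
          linarith [ht.2, hb.2]
        have hval : ((t ^ (-α) : ℝ) : ℂ) * g2 (x, t) = pdy E x t := by
          rw [hg2e _ hmem, ← mul_assoc, rpow_cancel ht.1, one_mul]
        rw [hval]
        exact (hdy _ hmem).hasDerivWithinAt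
      · apply intInt_rpow_bound hα.2 hb.1 (hslicecont x ⟨hx.1.le, hx.2⟩)
        exact hbound x ⟨hx.1.le, hx.2⟩
    have hlhs : Tendsto (fun x : ℝ => ∫ t in (0:ℝ)..b, ((t ^ (-α) : ℝ) : ℂ) * g2 (x, t))
        (𝓝[>] 0) (𝓝 (∫ t in (0:ℝ)..b, ((t ^ (-α) : ℝ) : ℂ) * g2 (0, t))) := by
      apply intervalIntegral.tendsto_integral_filter_of_dominated_convergence
        (bound := fun t => C * t ^ (-α))
      · filter_upwards [Ioo_mem_nhdsGT_of_mem ⟨le_refl (0:ℝ), hx0pos⟩] with x hx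
        rw [uIoc_of_le hb.1]
        exact (hslicecont x ⟨hx.1.le, hx.2.le⟩).aestronglyMeasurable measurableSet_Ioc
      · filter_upwards [Ioo_mem_nhdsGT_of_mem ⟨le_refl (0:ℝ), hx0pos⟩] with x hx
        apply ae_of_all
        intro t ht
        rw [uIoc_of_le hb.1] at ht
        exact hbound x ⟨hx.1.le, hx.2.le⟩ t ht
      · exact (intervalIntegral.intervalIntegrable_rpow' (by linarith [hα.2])).const_mul C
      · apply ae_of_all
        intro t ht
        rw [uIoc_of_le hb.1] at ht
        exact (tendsto_slice1 hg2 ⟨ht.1.le, lt_of_le_of_lt ht.2 hb.2⟩).const_mul _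
    have hrhs : Tendsto (fun x : ℝ => E x b - E x 0) (𝓝[>] 0) (𝓝 (E 0 b - E 0 0)) :=
      (tendsto_slice1 hEc hb).sub (tendsto_slice1 hEc ⟨le_refl 0, one_pos⟩)
    have heq : (fun x : ℝ => ∫ t in (0:ℝ)..b, ((t ^ (-α) : ℝ) : ℂ) * g2 (x, t))
        =ᶠ[𝓝[>] 0] (fun x : ℝ => E x b - E x 0) := by
      filter_upwards [Ioo_mem_nhdsGT_of_mem ⟨le_refl (0:ℝ), hx0pos⟩] with x hx
      exact hident x ⟨hx.1, hx.2.le⟩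
    exact (tendsto_nhds_unique (hlhs.congr' heq) hrhs).symm
  -- Step B
  intro y hy
  set rep : ℝ → ℂ := fun t => ((t ^ (-α) : ℝ) : ℂ) * g2 (0, t) with hrep
  have hrepcont : ContinuousOn rep (Ioo 0 1) := by
    apply ContinuousOn.mul
    · exact Complex.continuous_ofReal.comp_continuousOn (contOn_rpow_neg (fun t ht => ht.1))
    · apply contOn_slice2 hg2
      intro t ht
      exact ⟨le_refl 0, ht.1.le, by simpa using ht.2⟩
  obtain ⟨C, hC⟩ := (isCompact_Icc : IsCompact (Icc (0:ℝ) y)).exists_bound_of_continuousOn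
    (contOn_slice2 (x := 0) hg2 (fun t ht => ⟨le_refl 0, ht.1, by simpa using lt_of_le_of_lt ht.2 hy.2⟩))
  have hint : IntervalIntegrable rep volume 0 y := by
    apply intInt_rpow_bound hα.2 hy.1.le (hrepcont.mono (fun t ht => ⟨ht.1, lt_of_le_of_lt ht.2 hy.2⟩))
    intro t ht
    have h1 : ‖rep t‖ = t ^ (-α) * ‖g2 (0, t)‖ := by
      rw [hrep]
      rw [norm_mul, Complex.norm_real, Real.norm_eq_abs,
        _root_.abs_of_nonneg (Real.rpow_nonneg ht.1.le _)]
    rw [h1, mul_comm C]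
    exact mul_le_mul_of_nonneg_left (hC t ⟨ht.1.le, ht.2⟩) (Real.rpow_nonneg ht.1.le _)
  have hΦ : HasDerivAt (fun u => ∫ t in (0:ℝ)..u, rep t) (rep y) y := by
    apply intervalIntegral.integral_hasDerivAt_right hint
    · exact hrepcont.stronglyMeasurableAtFilter isOpen_Ioo y hy
    · exact hrepcont.continuousAt (isOpen_Ioo.mem_nhds hy)
  have heq : (fun t : ℝ => E 0 t) =ᶠ[𝓝 y] (fun u => E 0 0 + ∫ t in (0:ℝ)..u, rep t) := by
    filter_upwards [isOpen_Ioo.mem_nhds hy] with u hu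
    have := key u ⟨hu.1.le, hu.2⟩
    rw [hrep]
    linear_combination this
  have := ((hasDerivAt_const y (E 0 0)).add hΦ).congr_of_eventuallyEq heq
  simpa [hrep] using this

end ErnstAux


namespace ErnstAux

lemma intervalIntegrable_congr_Ioc {𝔼 : Type*} [NormedAddCommGroup 𝔼] {f g : ℝ → 𝔼} {a b : ℝ}
    (hle : a ≤ b) (h : ∀ t ∈ Ioc a b, f t = g t) (hf : IntervalIntegrable f volume a b) :
    IntervalIntegrable g volume a b := by
  constructor
  · exact hf.1.congr ((ae_restrict_iff' measurableSet_Ioc).2 (ae_of_all _ h))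
  · rw [Ioc_eq_empty (not_lt.2 hle)]
    exact integrableOn_empty

lemma rpow_cancel' {t : ℝ} (ht : 0 < t) (α : ℝ) :
    ((t ^ α : ℝ) : ℂ) * ((t ^ (-α) : ℝ) : ℂ) = 1 := by
  rw [mul_comm]; exact rpow_cancel ht α

lemma ofReal_combine {x t α : ℝ} (ht : 0 < t) :
    ((t ^ (-α) : ℝ) : ℂ) * ((x ^ α * t ^ α : ℝ) : ℂ) = ((x ^ α : ℝ) : ℂ) := by
  rw [← Complex.ofReal_mul]
  congr 1
  have h1 : t ^ (-α) * t ^ α = 1 := by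
    rw [← Real.rpow_add ht]; simp
  calc t ^ (-α) * (x ^ α * t ^ α) = t ^ (-α) * t ^ α * x ^ α := by ring
  _ = x ^ α := by rw [h1, one_mul]

lemma master {α : ℝ} (hα : α ∈ Ioo (0:ℝ) 1) {E : ℝ → ℝ → ℂ} {M : ℝ → ℝ → ℂ}
    {g1 g2 g3 : ℝ × ℝ → ℂ} {m1 : ℂ} {E1 : ℝ → ℂ}
    (hEc : ContinuousOn (fun p : ℝ × ℝ => E p.1 p.2) TriD)
    (hdx : ∀ p ∈ interior TriD, HasDerivAt (fun t => E t p.2) (pdx E p.1 p.2) p.1)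
    (hdy : ∀ p ∈ interior TriD, HasDerivAt (fun t => E p.1 t) (pdy E p.1 p.2) p.2)
    (hmix : ∀ p ∈ interior TriD, HasDerivAt (fun t => pdx E p.1 t) (M p.1 p.2) p.2)
    (hPDE : ∀ p ∈ interior TriD,
      ((E p.1 p.2).re : ℂ) * (M p.1 p.2 - (pdx E p.1 p.2 + pdy E p.1 p.2) /
        (2 * (1 - (p.1 : ℂ) - (p.2 : ℂ)))) = pdx E p.1 p.2 * pdy E p.1 p.2)
    (hg1 : ContinuousOn g1 TriD)
    (hg1e : ∀ p ∈ interior TriD, g1 p = ((p.1 ^ α : ℝ) : ℂ) * pdx E p.1 p.2)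
    (hg2 : ContinuousOn g2 TriD)
    (hg2e : ∀ p ∈ interior TriD, g2 p = ((p.2 ^ α : ℝ) : ℂ) * pdy E p.1 p.2)
    (hg3 : ContinuousOn g3 TriD)
    (hg3e : ∀ p ∈ interior TriD, g3 p = ((p.1 ^ α * p.2 ^ α : ℝ) : ℂ) * M p.1 p.2)
    (hpos : ∀ p ∈ TriD, 0 < (E p.1 p.2).re)
    (hE00 : E 0 0 = 1)
    (hm1 : Tendsto (fun x : ℝ => ((x ^ α : ℝ) : ℂ) * deriv (fun t => E t 0) x) (𝓝[>] 0) (𝓝 m1))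
    (hb1 : ∀ y ∈ Ico (0:ℝ) 1, E 0 y = E1 y) :
    ∀ y ∈ Ico (0:ℝ) 1,
      Tendsto (fun x : ℝ => ((x ^ α : ℝ) : ℂ) * pdx E x y) (𝓝[>] 0)
        (𝓝 (m1 * Complex.exp (Complex.I *
              ((∫ y' in (0:ℝ)..y, (deriv E1 y').im / (E1 y').re : ℝ) : ℂ)) *
            ((E1 y).re : ℂ) / ((Real.sqrt (1 - y) : ℝ) : ℂ))) := by
  -- swapped configuration for the x-boundary
  have hEc' : ContinuousOn (fun p : ℝ × ℝ => E p.2 p.1) TriD :=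
    hEc.comp continuous_swap.continuousOn (fun p hp => swap_TriD hp)
  have hE1d : ∀ t ∈ Ioo (0:ℝ) 1,
      HasDerivAt (fun s => E 0 s) (((t ^ (-α) : ℝ) : ℂ) * g2 (0, t)) t :=
    boundary_deriv hα hEc hdy hg2 hg2e
  have hE0d : ∀ x ∈ Ioo (0:ℝ) 1,
      HasDerivAt (fun t => E t 0) (((x ^ (-α) : ℝ) : ℂ) * g1 (x, 0)) x := by
    have := boundary_deriv hα (E := fun a b => E b a) (g2 := fun p => g1 p.swap) hEc'
      (fun p hp => hdx (p.2, p.1) (swap_intTriD hp))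
      (hg1.comp continuous_swap.continuousOn (fun p hp => swap_TriD hp))
      (fun p hp => hg1e (p.2, p.1) (swap_intTriD hp))
    exact fun x hx => this x hx
  -- value of g1 at the corner
  have h00 : g1 (0, 0) = m1 := by
    have hev : (fun x : ℝ => ((x ^ α : ℝ) : ℂ) * deriv (fun t => E t 0) x)
        =ᶠ[𝓝[>] (0:ℝ)] (fun x : ℝ => g1 (x, 0)) := by
      filter_upwards [Ioo_mem_nhdsGT_of_mem
        (show (0:ℝ) ∈ Ico (0:ℝ) 1 from ⟨le_refl 0, one_pos⟩)] with x hx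
      rw [(hE0d x hx).deriv, ← mul_assoc, rpow_cancel' hx.1, one_mul]
    exact tendsto_nhds_unique (tendsto_slice1 hg1 ⟨le_refl 0, one_pos⟩) (hm1.congr' hev)
  -- L1 : limit of x^α ∂ₓE along vertical approach
  have L1 : ∀ y ∈ Ioo (0:ℝ) 1,
      Tendsto (fun x : ℝ => ((x ^ α : ℝ) : ℂ) * pdx E x y) (𝓝[>] 0) (𝓝 (g1 (0, y))) := by
    intro y hy
    apply (tendsto_slice1 hg1 ⟨hy.1.le, hy.2⟩).congr'
    filter_upwards [Ioo_mem_nhdsGT_of_mem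
      (show (0:ℝ) ∈ Ico (0:ℝ) (1 - y) from ⟨le_refl 0, by linarith [hy.2]⟩)] with x hx
    exact hg1e (x, y) (mem_intTriD hx.1 hy.1 (by linarith [hx.2]))
  -- L3 : integral identity for h := g1(0,·)
  have key3 : ∀ a ∈ Ioo (0:ℝ) 1, ∀ b ∈ Ico a 1,
      g1 (0, b) - g1 (0, a) = ∫ t in a..b, ((t ^ (-α) : ℝ) : ℂ) * g3 (0, t) := by
    intro a ha b hb
    have hab : a ≤ b := hb.1
    have hb1' : b < 1 := hb.2
    set x0 : ℝ := (1 - b) / 2 with hx0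
    have hx0pos : 0 < x0 := by simp only [hx0]; linarith
    have hKsub : (Icc 0 x0 ×ˢ Icc a b : Set (ℝ × ℝ)) ⊆ TriD := by
      rintro ⟨u, v⟩ ⟨hu, hv⟩
      simp only [mem_Icc] at hu hv
      refine ⟨hu.1, le_trans ha.1.le hv.1, ?_⟩
      simp only [hx0] at hu; linarith [hu.2, hv.2]
    obtain ⟨C, hC⟩ := (isCompact_Icc.prod isCompact_Icc).exists_bound_of_continuousOn
      (hg3.mono hKsub)
    have hbound : ∀ x ∈ Icc (0:ℝ) x0, ∀ t ∈ Ioc a b,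
        ‖((t ^ (-α) : ℝ) : ℂ) * g3 (x, t)‖ ≤ C * t ^ (-α) := by
      intro x hx t ht
      have ht0 : 0 < t := lt_trans ha.1 ht.1
      have h1 : ‖((t ^ (-α) : ℝ) : ℂ) * g3 (x, t)‖ = t ^ (-α) * ‖g3 (x, t)‖ := by
        rw [norm_mul, Complex.norm_real, Real.norm_eq_abs,
          _root_.abs_of_nonneg (Real.rpow_nonneg ht0.le _)]
      rw [h1, mul_comm C]
      exact mul_le_mul_of_nonneg_left
        (hC (x, t) ⟨hx, ⟨ht.1.le, ht.2⟩⟩) (Real.rpow_nonneg ht0.le _)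
    have hslicecont : ∀ x ∈ Icc (0:ℝ) x0,
        ContinuousOn (fun t : ℝ => ((t ^ (-α) : ℝ) : ℂ) * g3 (x, t)) (Icc a b) := by
      intro x hx
      apply ContinuousOn.mul
      · exact Complex.continuous_ofReal.comp_continuousOn
          (contOn_rpow_neg (fun t ht => lt_of_lt_of_le ha.1 ht.1))
      · exact contOn_slice2 hg3 (fun t ht => hKsub ⟨hx, ht⟩)
    have hident : ∀ x ∈ Ioc (0:ℝ) x0,
        (∫ t in a..b, ((t ^ (-α) : ℝ) : ℂ) * g3 (x, t)) =
          ((x ^ α : ℝ) : ℂ) * pdx E x b - ((x ^ α : ℝ) : ℂ) * pdx E x a := by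
      intro x hx
      apply intervalIntegral.integral_eq_sub_of_hasDerivAt
      · intro t ht
        rw [uIcc_of_le hab] at ht
        have ht0 : 0 < t := lt_of_lt_of_le ha.1 ht.1
        have hmem : ((x, t) : ℝ × ℝ) ∈ interior TriD := by
          apply mem_intTriD hx.1 ht0
          have hxx0 : x ≤ x0 := hx.2
          rw [hx0] at hxx0; linarith [ht.2]
        have hval : ((x ^ α : ℝ) : ℂ) * M x t = ((t ^ (-α) : ℝ) : ℂ) * g3 (x, t) := by
          rw [hg3e _ hmem, ← mul_assoc, ofReal_combine ht0]
        rw [← hval]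
        exact ((hmix _ hmem).const_mul _)
      · rw [← uIcc_of_le hab] at hslicecont
        exact (hslicecont x ⟨hx.1.le, hx.2⟩).intervalIntegrable
    have hlhs : Tendsto (fun x : ℝ => ∫ t in a..b, ((t ^ (-α) : ℝ) : ℂ) * g3 (x, t))
        (𝓝[>] 0) (𝓝 (∫ t in a..b, ((t ^ (-α) : ℝ) : ℂ) * g3 (0, t))) := by
      apply intervalIntegral.tendsto_integral_filter_of_dominated_convergence
        (bound := fun t => C * t ^ (-α))
      · filter_upwards [Ioo_mem_nhdsGT_of_mem ⟨le_refl (0:ℝ), hx0pos⟩] with x hx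
        rw [uIoc_of_le hab]
        exact ((hslicecont x ⟨hx.1.le, hx.2.le⟩).mono
          Ioc_subset_Icc_self).aestronglyMeasurable measurableSet_Ioc
      · filter_upwards [Ioo_mem_nhdsGT_of_mem ⟨le_refl (0:ℝ), hx0pos⟩] with x hx
        apply ae_of_all
        intro t ht
        rw [uIoc_of_le hab] at ht
        exact hbound x ⟨hx.1.le, hx.2.le⟩ t ht
      · apply ContinuousOn.intervalIntegrable
        apply continuousOn_const.mul
        rw [uIcc_of_le hab]
        exact contOn_rpow_neg (fun t ht => lt_of_lt_of_le ha.1 ht.1)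
      · apply ae_of_all
        intro t ht
        rw [uIoc_of_le hab] at ht
        exact (tendsto_slice1 hg3
          ⟨(lt_trans ha.1 ht.1).le, lt_of_le_of_lt ht.2 hb1'⟩).const_mul _
    have hrhs : Tendsto (fun x : ℝ => ((x ^ α : ℝ) : ℂ) * pdx E x b - ((x ^ α : ℝ) : ℂ) * pdx E x a)
        (𝓝[>] 0) (𝓝 (g1 (0, b) - g1 (0, a))) :=
      (L1 b ⟨lt_of_lt_of_le ha.1 hab, hb1'⟩).sub (L1 a ha)
    have heq2 : (fun x : ℝ => ∫ t in a..b, ((t ^ (-α) : ℝ) : ℂ) * g3 (x, t))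
        =ᶠ[𝓝[>] (0:ℝ)]
        (fun x : ℝ => ((x ^ α : ℝ) : ℂ) * pdx E x b - ((x ^ α : ℝ) : ℂ) * pdx E x a) := by
      filter_upwards [Ioo_mem_nhdsGT_of_mem ⟨le_refl (0:ℝ), hx0pos⟩] with x hx
      exact hident x ⟨hx.1, hx.2.le⟩
    exact (tendsto_nhds_unique (hlhs.congr' heq2) hrhs).symm
  -- derivative of h := g1 (0, ·)
  have L3 : ∀ y ∈ Ioo (0:ℝ) 1,
      HasDerivAt (fun u => g1 (0, u)) (((y ^ (-α) : ℝ) : ℂ) * g3 (0, y)) y := by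
    intro y hy
    set a : ℝ := y / 2 with ha'
    have ha : a ∈ Ioo (0:ℝ) 1 := ⟨by simp only [ha']; linarith [hy.1], by simp only [ha']; linarith [hy.2]⟩
    have hay : a < y := by simp only [ha']; linarith [hy.1]
    have hrepcont : ContinuousOn (fun t : ℝ => ((t ^ (-α) : ℝ) : ℂ) * g3 (0, t)) (Ioo 0 1) := by
      apply ContinuousOn.mul
      · exact Complex.continuous_ofReal.comp_continuousOn (contOn_rpow_neg (fun t ht => ht.1))
      · exact contOn_slice2 hg3 (fun t ht => ⟨le_refl 0, ht.1.le, by simpa using ht.2⟩)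
    have hint : IntervalIntegrable (fun t : ℝ => ((t ^ (-α) : ℝ) : ℂ) * g3 (0, t)) volume a y := by
      apply ContinuousOn.intervalIntegrable
      apply hrepcont.mono
      rw [uIcc_of_le hay.le]
      intro t ht
      exact ⟨lt_of_lt_of_le ha.1 ht.1, lt_of_le_of_lt ht.2 hy.2⟩
    have hΦ : HasDerivAt (fun u => ∫ t in a..u, ((t ^ (-α) : ℝ) : ℂ) * g3 (0, t))
        (((y ^ (-α) : ℝ) : ℂ) * g3 (0, y)) y := by
      apply intervalIntegral.integral_hasDerivAt_right hint
      · exact hrepcont.stronglyMeasurableAtFilter isOpen_Ioo y hy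
      · exact hrepcont.continuousAt (isOpen_Ioo.mem_nhds hy)
    have heq : (fun u : ℝ => g1 (0, u)) =ᶠ[𝓝 y]
        (fun u => g1 (0, a) + ∫ t in a..u, ((t ^ (-α) : ℝ) : ℂ) * g3 (0, t)) := by
      filter_upwards [Ioo_mem_nhds hay hy.2] with u hu
      have := key3 a ha u ⟨hu.1.le, hu.2⟩
      linear_combination this
    have := ((hasDerivAt_const y (g1 (0, a))).add hΦ).congr_of_eventuallyEq heq
    simpa using this
  -- L4: limit of the PDE
  have hposC : ∀ y ∈ Ico (0:ℝ) 1, ((E 0 y).re : ℂ) ≠ 0 := by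
    intro y hy
    exact Complex.ofReal_ne_zero.2
      (ne_of_gt (hpos (0, y) ⟨le_refl 0, hy.1, by simpa using hy.2⟩))
  have L4 : ∀ y ∈ Ioo (0:ℝ) 1,
      ((y ^ (-α) : ℝ) : ℂ) * g3 (0, y) = g1 (0, y) *
        ((((y ^ (-α) : ℝ) : ℂ) * g2 (0, y)) / ((E 0 y).re : ℂ) + 1 / (2 * (1 - (y : ℂ)))) := by
    intro y hy
    have hyI : y ∈ Ico (0:ℝ) 1 := ⟨hy.1.le, hy.2⟩
    have hevmem : ∀ᶠ x in 𝓝[>] (0:ℝ), ((x, y) : ℝ × ℝ) ∈ interior TriD := by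
      filter_upwards [Ioo_mem_nhdsGT_of_mem
        (show (0:ℝ) ∈ Ico (0:ℝ) (1 - y) from ⟨le_refl 0, by linarith [hy.2]⟩)] with x hx
      exact mem_intTriD hx.1 hy.1 (by linarith [hx.2])
    -- individual limits
    have tre : Tendsto (fun x : ℝ => ((E x y).re : ℂ)) (𝓝[>] 0) (𝓝 ((E 0 y).re : ℂ)) := by
      have : ContinuousOn (fun p : ℝ × ℝ => ((E p.1 p.2).re : ℂ)) TriD :=
        (Complex.continuous_ofReal.comp Complex.continuous_re).comp_continuousOn hEc
      exact tendsto_slice1 this hyI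
    have tM : Tendsto (fun x : ℝ => ((x ^ α : ℝ) : ℂ) * M x y) (𝓝[>] 0)
        (𝓝 (((y ^ (-α) : ℝ) : ℂ) * g3 (0, y))) := by
      apply ((tendsto_slice1 hg3 hyI).const_mul (((y ^ (-α) : ℝ) : ℂ))).congr'
      filter_upwards [hevmem] with x hx
      rw [hg3e _ hx, ← mul_assoc, ofReal_combine hy.1]
    have tpdx := L1 y hy
    have tg2 : Tendsto (fun x : ℝ => ((y ^ (-α) : ℝ) : ℂ) * g2 (x, y)) (𝓝[>] 0)
        (𝓝 (((y ^ (-α) : ℝ) : ℂ) * g2 (0, y))) :=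
      (tendsto_slice1 hg2 hyI).const_mul _
    have tpdy : Tendsto (fun x : ℝ => pdy E x y) (𝓝[>] 0)
        (𝓝 (((y ^ (-α) : ℝ) : ℂ) * g2 (0, y))) := by
      apply tg2.congr'
      filter_upwards [hevmem] with x hx
      rw [hg2e _ hx, ← mul_assoc, rpow_cancel hy.1, one_mul]
    have tzero : Tendsto (fun x : ℝ => ((x ^ α : ℝ) : ℂ)) (𝓝[>] 0) (𝓝 0) := by
      have h1 : Tendsto (fun x : ℝ => x ^ α) (𝓝 0) (𝓝 ((0:ℝ) ^ α)) :=
        (Real.continuousAt_rpow_const 0 α (Or.inr hα.1.le)).tendsto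
      rw [Real.zero_rpow (ne_of_gt hα.1)] at h1
      have h2 : Tendsto (fun x : ℝ => ((x ^ α : ℝ) : ℂ)) (𝓝[>] 0) (𝓝 ((0:ℝ) : ℂ)) :=
        (Complex.continuous_ofReal.tendsto _).comp
          (h1.mono_left (nhdsWithin_le_nhds (s := Ioi (0:ℝ))))
      simpa using h2
    have tpdy0 : Tendsto (fun x : ℝ => ((x ^ α : ℝ) : ℂ) * pdy E x y) (𝓝[>] 0) (𝓝 0) := by
      have := tzero.mul tpdy
      rw [zero_mul] at this
      exact this
    have h2ne : (2 * (1 - (y : ℂ))) ≠ 0 := by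
      apply mul_ne_zero two_ne_zero
      rw [sub_ne_zero]
      intro h
      have : (y : ℂ) = ((1:ℝ) : ℂ) := by rw [← h]; simp
      rw [Complex.ofReal_inj] at this
      linarith [hy.2]
    have tdenom : Tendsto (fun x : ℝ => (2 * (1 - (x : ℂ) - (y : ℂ)))) (𝓝[>] 0)
        (𝓝 (2 * (1 - (y : ℂ)))) := by
      have hc : Continuous (fun x : ℝ => (2 * (1 - (x : ℂ) - (y : ℂ)))) :=
        continuous_const.mul ((continuous_const.sub Complex.continuous_ofReal).sub continuous_const)
      have := (hc.tendsto 0).mono_left (nhdsWithin_le_nhds (s := Ioi (0:ℝ)))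
      simpa using this
    have hlim1 : Tendsto (fun x : ℝ => ((E x y).re : ℂ) *
        (((x ^ α : ℝ) : ℂ) * M x y -
          (((x ^ α : ℝ) : ℂ) * pdx E x y + ((x ^ α : ℝ) : ℂ) * pdy E x y) /
            (2 * (1 - (x : ℂ) - (y : ℂ))))) (𝓝[>] 0)
        (𝓝 (((E 0 y).re : ℂ) * ((((y ^ (-α) : ℝ) : ℂ) * g3 (0, y)) -
          (g1 (0, y) + 0) / (2 * (1 - (y : ℂ)))))) :=
      tre.mul (tM.sub ((tpdx.add tpdy0).div tdenom h2ne))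
    have hlim2 : Tendsto (fun x : ℝ => (((x ^ α : ℝ) : ℂ) * pdx E x y) * pdy E x y) (𝓝[>] 0)
        (𝓝 (g1 (0, y) * (((y ^ (-α) : ℝ) : ℂ) * g2 (0, y)))) := tpdx.mul tpdy
    have hevPDE : (fun x : ℝ => ((E x y).re : ℂ) *
        (((x ^ α : ℝ) : ℂ) * M x y -
          (((x ^ α : ℝ) : ℂ) * pdx E x y + ((x ^ α : ℝ) : ℂ) * pdy E x y) /
            (2 * (1 - (x : ℂ) - (y : ℂ)))))
        =ᶠ[𝓝[>] (0:ℝ)] (fun x : ℝ => (((x ^ α : ℝ) : ℂ) * pdx E x y) * pdy E x y) := by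
      filter_upwards [hevmem] with x hx
      have hP := hPDE (x, y) hx
      simp only at hP
      linear_combination ((x ^ α : ℝ) : ℂ) * hP
    have hkey := tendsto_nhds_unique (hlim1.congr' hevPDE) hlim2
    rw [add_zero] at hkey
    have hry := hposC y hyI
    field_simp at hkey ⊢
    linear_combination hkey
  -- the ODE for h
  set φ : ℝ → ℂ := fun t => (((t ^ (-α) : ℝ) : ℂ) * g2 (0, t)) / ((E 0 t).re : ℂ) +
    1 / (2 * (1 - (t : ℂ))) with hφdef
  have h2ne' : ∀ t : ℝ, t < 1 → (2 * (1 - (t : ℂ))) ≠ 0 := by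
    intro t ht
    apply mul_ne_zero two_ne_zero
    rw [sub_ne_zero]
    intro h
    have : (t : ℂ) = ((1:ℝ) : ℂ) := by rw [← h]; simp
    rw [Complex.ofReal_inj] at this
    linarith
  have hhd : ∀ y ∈ Ioo (0:ℝ) 1, HasDerivAt (fun u => g1 (0, u)) (g1 (0, y) * φ y) y := by
    intro y hy
    have := L3 y hy
    rwa [L4 y hy] at this
  have hφcont : ContinuousOn φ (Ioo 0 1) := by
    apply ContinuousOn.add
    · apply ContinuousOn.div
      · apply ContinuousOn.mul
        · exact Complex.continuous_ofReal.comp_continuousOn (contOn_rpow_neg (fun t ht => ht.1))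
        · exact contOn_slice2 hg2 (fun t ht => ⟨le_refl 0, ht.1.le, by simpa using ht.2⟩)
      · exact (Complex.continuous_ofReal.comp Complex.continuous_re).comp_continuousOn
          (contOn_slice2 hEc (fun t ht => ⟨le_refl 0, ht.1.le, by simpa using ht.2⟩))
      · intro t ht
        exact hposC t ⟨ht.1.le, ht.2⟩
    · apply ContinuousOn.div continuousOn_const
      · exact (continuous_const.mul
          (continuous_const.sub Complex.continuous_ofReal)).continuousOn
      · intro t ht
        exact h2ne' t ht.2
  have hφint : ∀ b ∈ Ico (0:ℝ) 1, IntervalIntegrable φ volume 0 b := by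
    intro b hb
    apply IntervalIntegrable.add
    · -- the singular part
      obtain ⟨C, hC⟩ := (isCompact_Icc : IsCompact (Icc (0:ℝ) b)).exists_bound_of_continuousOn
        (contOn_slice2 (x := 0) hg2
          (fun t ht => ⟨le_refl 0, ht.1, by simpa using lt_of_le_of_lt ht.2 hb.2⟩))
      obtain ⟨t0, ht0mem, ht0min⟩ := (isCompact_Icc : IsCompact (Icc (0:ℝ) b)).exists_isMinOn
        ⟨0, left_mem_Icc.2 hb.1⟩
        (Complex.continuous_re.comp_continuousOn
          (contOn_slice2 hEc (fun t ht => ⟨le_refl 0, ht.1, by simpa using lt_of_le_of_lt ht.2 hb.2⟩)))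
      have hc0 : 0 < (E 0 t0).re :=
        hpos (0, t0) ⟨le_refl 0, ht0mem.1, by simpa using lt_of_le_of_lt ht0mem.2 hb.2⟩
      apply intInt_rpow_bound (C := C / (E 0 t0).re) hα.2 hb.1
      · apply ContinuousOn.div
        · apply ContinuousOn.mul
          · exact Complex.continuous_ofReal.comp_continuousOn (contOn_rpow_neg (fun t ht => ht.1))
          · exact contOn_slice2 hg2
              (fun t ht => ⟨le_refl 0, ht.1.le, by simpa using lt_of_le_of_lt ht.2 hb.2⟩)
        · exact (Complex.continuous_ofReal.comp Complex.continuous_re).comp_continuousOn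
            (contOn_slice2 hEc
              (fun t ht => ⟨le_refl 0, ht.1.le, by simpa using lt_of_le_of_lt ht.2 hb.2⟩))
        · intro t ht
          exact hposC t ⟨ht.1.le, lt_of_le_of_lt ht.2 hb.2⟩
      · intro t ht
        have hrt : 0 < (E 0 t).re :=
          hpos (0, t) ⟨le_refl 0, ht.1.le, by simpa using lt_of_le_of_lt ht.2 hb.2⟩
        have h1 : ‖(((t ^ (-α) : ℝ) : ℂ) * g2 (0, t)) / ((E 0 t).re : ℂ)‖ =
            t ^ (-α) * ‖g2 (0, t)‖ / (E 0 t).re := by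
          rw [norm_div, norm_mul, Complex.norm_real, Complex.norm_real, Real.norm_eq_abs,
            Real.norm_eq_abs, _root_.abs_of_nonneg (Real.rpow_nonneg ht.1.le _),
            _root_.abs_of_nonneg hrt.le]
        rw [h1]
        have h2 : t ^ (-α) * ‖g2 (0, t)‖ / (E 0 t).re ≤ (t ^ (-α) * C) / (E 0 t0).re := by
          have hC0 : 0 ≤ C := le_trans (norm_nonneg _) (hC 0 (left_mem_Icc.2 hb.1))
          apply div_le_div₀ (mul_nonneg (Real.rpow_nonneg ht.1.le _) hC0)
          · exact mul_le_mul_of_nonneg_left (hC t ⟨ht.1.le, ht.2⟩) (Real.rpow_nonneg ht.1.le _)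
          · exact hc0
          · exact ht0min ⟨ht.1.le, ht.2⟩
        calc t ^ (-α) * ‖g2 (0, t)‖ / (E 0 t).re ≤ (t ^ (-α) * C) / (E 0 t0).re := h2
        _ = C / (E 0 t0).re * t ^ (-α) := by ring
    · apply ContinuousOn.intervalIntegrable
      apply ContinuousOn.div continuousOn_const
      · exact (continuous_const.mul
          (continuous_const.sub Complex.continuous_ofReal)).continuousOn
      · intro t ht
        rw [uIcc_of_le hb.1] at ht
        exact h2ne' t (lt_of_le_of_lt ht.2 hb.2)
  set Ψ : ℝ → ℂ := fun u => ∫ t in (0:ℝ)..u, φ t with hΨdef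
  have hΨd : ∀ y ∈ Ioo (0:ℝ) 1, HasDerivAt Ψ (φ y) y := by
    intro y hy
    apply intervalIntegral.integral_hasDerivAt_right (hφint y ⟨hy.1.le, hy.2⟩)
    · exact hφcont.stronglyMeasurableAtFilter isOpen_Ioo y hy
    · exact hφcont.continuousAt (isOpen_Ioo.mem_nhds hy)
  have hΨ0 : Tendsto Ψ (𝓝[>] 0) (𝓝 0) := by
    have hcw : ContinuousWithinAt Ψ (Icc 0 (1/2 : ℝ)) 0 := by
      apply intervalIntegral.continuousWithinAt_primitive (measure_singleton 0)
      have := hφint (1/2 : ℝ) ⟨by norm_num, by norm_num⟩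
      simpa using this
    have h0 : Ψ 0 = 0 := intervalIntegral.integral_same
    have := hcw.tendsto
    rw [h0] at this
    apply this.mono_left
    rw [← nhdsWithin_Ioc_eq_nhdsGT (show (0:ℝ) < 1/2 by norm_num)]
    exact nhdsWithin_mono _ Ioc_subset_Icc_self
  -- constancy of G = h · exp(−Ψ)
  have hGd : ∀ u ∈ Ioo (0:ℝ) 1,
      HasDerivAt (fun u => g1 (0, u) * Complex.exp (-Ψ u)) 0 u := by
    intro u hu
    have h1 := (hhd u hu).mul (((hΨd u hu).neg).cexp)
    have h2 : g1 (0, u) * φ u * Complex.exp ((-Ψ) u) + g1 (0, u) * (Complex.exp ((-Ψ) u) * -φ u) = 0 := by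
      ring
    rw [h2] at h1
    exact h1
  have hGconst : ∀ y ∈ Ioo (0:ℝ) 1, g1 (0, y) * Complex.exp (-Ψ y) = m1 := by
    intro y hy
    set G : ℝ → ℂ := fun u => g1 (0, u) * Complex.exp (-Ψ u) with hGdef
    have hGa : ∀ a ∈ Ioo (0:ℝ) y, G y = G a := by
      intro a ha
      have hsub : Icc a y ⊆ Ioo (0:ℝ) 1 := fun u hu =>
        ⟨lt_of_lt_of_le ha.1 hu.1, lt_of_le_of_lt hu.2 hy.2⟩
      have hcont : ContinuousOn G (Icc a y) := fun u hu =>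
        ((hGd u (hsub hu)).continuousAt).continuousWithinAt
      have hderiv : ∀ u ∈ Ico a y, HasDerivWithinAt G 0 (Ici u) u := fun u hu =>
        (hGd u (hsub ⟨hu.1, hu.2.le⟩)).hasDerivWithinAt
      exact (constant_of_has_deriv_right_zero hcont hderiv y (right_mem_Icc.2 ha.2.le))
    have hG0 : Tendsto G (𝓝[>] 0) (𝓝 m1) := by
      have hh0t : Tendsto (fun a : ℝ => g1 (0, a)) (𝓝[>] 0) (𝓝 m1) := by
        have := tendsto_slice2 hg1 ⟨le_refl (0:ℝ), one_pos⟩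
        rwa [h00] at this
      have hexp : Tendsto (fun a : ℝ => Complex.exp (-Ψ a)) (𝓝[>] 0) (𝓝 1) := by
        have := (hΨ0.neg).cexp
        simpa using this
      have := hh0t.mul hexp
      simpa using this
    have hGy : Tendsto G (𝓝[>] 0) (𝓝 (G y)) := by
      apply tendsto_const_nhds.congr'
      filter_upwards [Ioo_mem_nhdsGT_of_mem
        (show (0:ℝ) ∈ Ico (0:ℝ) y from ⟨le_refl 0, hy.1⟩)] with a ha
      exact hGa a ha
    exact tendsto_nhds_unique hGy hG0
  have hform : ∀ y ∈ Ioo (0:ℝ) 1, g1 (0, y) = m1 * Complex.exp (Ψ y) := by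
    intro y hy
    have h1 := hGconst y hy
    rw [Complex.exp_neg] at h1
    field_simp at h1
    linear_combination h1
  -- real and imaginary parts of φ
  set Reφ : ℝ → ℝ := fun t => t ^ (-α) / (E 0 t).re * (g2 (0, t)).re + 1 / (2 * (1 - t))
    with hReφdef
  set Imφ : ℝ → ℝ := fun t => t ^ (-α) / (E 0 t).re * (g2 (0, t)).im with hImφdef
  have hφalt : ∀ t ∈ Ioo (0:ℝ) 1, φ t = ((t ^ (-α) / (E 0 t).re : ℝ) : ℂ) * g2 (0, t) +
      ((1 / (2 * (1 - t)) : ℝ) : ℂ) := by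
    intro t ht
    have hne1 : ((E 0 t).re : ℂ) ≠ 0 := hposC t ⟨ht.1.le, ht.2⟩
    have hne2 := h2ne' t ht.2
    have hne3 : (2 * (1 - (t : ℝ))) ≠ 0 := by
      intro h
      apply hne2
      rw [show (2 * (1 - (t:ℂ))) = (((2 * (1 - t) : ℝ)) : ℂ) by push_cast; ring, h]
      simp
    rw [hφdef]
    simp only
    push_cast
    field_simp
  have hre : ∀ t ∈ Ioo (0:ℝ) 1, (φ t).re = Reφ t := by
    intro t ht
    rw [hφalt t ht, hReφdef]
    simp only [Complex.add_re, Complex.re_ofReal_mul, Complex.ofReal_re]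
  have him : ∀ t ∈ Ioo (0:ℝ) 1, (φ t).im = Imφ t := by
    intro t ht
    rw [hφalt t ht, hImφdef]
    simp only [Complex.add_im, Complex.im_ofReal_mul, Complex.ofReal_im, add_zero]
  have hval : ∀ y ∈ Ioo (0:ℝ) 1, g1 (0, y) =
      m1 * Complex.exp (Complex.I * ((∫ t in (0:ℝ)..y, Imφ t : ℝ) : ℂ)) *
        (((E 0 y).re : ℝ) : ℂ) / ((Real.sqrt (1 - y) : ℝ) : ℂ) := by
    intro y hy
    have hint := hφint y ⟨hy.1.le, hy.2⟩
    have hrepart : (Ψ y).re = ∫ t in (0:ℝ)..y, Reφ t := by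
      have h1 := Complex.reCLM.intervalIntegral_comp_comm hint
      have h2 : (Ψ y).re = ∫ t in (0:ℝ)..y, (φ t).re := by
        rw [hΨdef]; simp only
        exact h1.symm
      rw [h2]
      apply intervalIntegral.integral_congr_ae
      apply ae_of_all
      intro t ht
      rw [uIoc_of_le hy.1.le] at ht
      exact hre t ⟨ht.1, lt_of_le_of_lt ht.2 hy.2⟩
    have himpart : (Ψ y).im = ∫ t in (0:ℝ)..y, Imφ t := by
      have h1 := Complex.imCLM.intervalIntegral_comp_comm hint
      have h2 : (Ψ y).im = ∫ t in (0:ℝ)..y, (φ t).im := by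
        rw [hΨdef]; simp only
        exact h1.symm
      rw [h2]
      apply intervalIntegral.integral_congr_ae
      apply ae_of_all
      intro t ht
      rw [uIoc_of_le hy.1.le] at ht
      exact him t ⟨ht.1, lt_of_le_of_lt ht.2 hy.2⟩
    have hΨval : Ψ y = ((∫ t in (0:ℝ)..y, Reφ t : ℝ) : ℂ) +
        ((∫ t in (0:ℝ)..y, Imφ t : ℝ) : ℂ) * Complex.I := by
      rw [← hrepart, ← himpart]
      exact (Complex.re_add_im _).symm
    have hrpos : ∀ t ∈ Icc (0:ℝ) y, 0 < (E 0 t).re := fun t ht =>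
      hpos (0, t) ⟨le_refl 0, ht.1, by simpa using lt_of_le_of_lt ht.2 hy.2⟩
    have hrcont : ContinuousOn (fun t => (E 0 t).re) (Icc 0 y) :=
      Complex.continuous_re.comp_continuousOn
        (contOn_slice2 hEc (fun t ht => ⟨le_refl 0, ht.1, by simpa using lt_of_le_of_lt ht.2 hy.2⟩))
    have hReint : IntervalIntegrable Reφ volume 0 y := by
      apply intervalIntegrable_congr_Ioc hy.1.le
        (f := fun t => (φ t).re)
      · intro t ht
        exact hre t ⟨ht.1, lt_of_le_of_lt ht.2 hy.2⟩
      · exact ⟨Complex.reCLM.integrable_comp hint.1, Complex.reCLM.integrable_comp hint.2⟩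
    have hAderiv : ∀ t ∈ Ioo (0:ℝ) y, HasDerivWithinAt
        (fun t => Real.log ((E 0 t).re) - Real.log (1 - t) / 2) (Reφ t) (Ioi t) t := by
      intro t ht
      have htI : t ∈ Ioo (0:ℝ) 1 := ⟨ht.1, lt_trans ht.2 hy.2⟩
      have hrd : HasDerivAt (fun t => (E 0 t).re) ((((t ^ (-α) : ℝ) : ℂ) * g2 (0, t)).re) t :=
        Complex.reCLM.hasFDerivAt.comp_hasDerivAt t (hE1d t htI)
      have hrtpos : 0 < (E 0 t).re := hrpos t ⟨ht.1.le, ht.2.le⟩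
      have h1t : (1:ℝ) - t ≠ 0 := ne_of_gt (by linarith [htI.2])
      have hlog1 := hrd.log (ne_of_gt hrtpos)
      have hlog2 : HasDerivAt (fun t : ℝ => Real.log (1 - t)) (-1 / (1 - t)) t := by
        have h3 : HasDerivAt (fun t : ℝ => 1 - t) (-1) t := by
          simpa using (hasDerivAt_id t).const_sub 1
        simpa using h3.log h1t
      apply HasDerivAt.hasDerivWithinAt
      have hcomb := hlog1.sub (hlog2.div_const 2)
      convert hcomb using 1
      · rfl
      rw [Complex.re_ofReal_mul, hReφdef]
      simp only
      field_simp
      ring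
    have hLr : (∫ t in (0:ℝ)..y, Reφ t) = Real.log ((E 0 y).re) - Real.log (1 - y) / 2 := by
      have hcontA : ContinuousOn
          (fun t => Real.log ((E 0 t).re) - Real.log (1 - t) / 2) (Icc 0 y) := by
        apply ContinuousOn.sub
        · exact hrcont.log (fun t ht => ne_of_gt (hrpos t ht))
        · apply ContinuousOn.div_const
          apply ContinuousOn.log (continuousOn_const.sub continuousOn_id)
          intro t ht
          have : t < 1 := lt_of_le_of_lt ht.2 hy.2
          exact ne_of_gt (by simp only [Pi.sub_apply, id_eq]; linarith)
      have := intervalIntegral.integral_eq_sub_of_hasDeriv_right_of_le hy.1.le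
        hcontA hAderiv hReint
      rw [this, hE00]
      simp
    have hexpLr : Real.exp (∫ t in (0:ℝ)..y, Reφ t) = (E 0 y).re / Real.sqrt (1 - y) := by
      rw [hLr, Real.exp_sub, Real.exp_log (hrpos y (right_mem_Icc.2 hy.1.le))]
      congr 1
      rw [Real.sqrt_eq_rpow, Real.rpow_def_of_pos (by linarith [hy.2] : (0:ℝ) < 1 - y),
        mul_one_div]
    rw [hform y hy, hΨval, Complex.exp_add, ← Complex.ofReal_exp, hexpLr]
    rw [show ((∫ t in (0:ℝ)..y, Imφ t : ℝ) : ℂ) * Complex.I =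
      Complex.I * ((∫ t in (0:ℝ)..y, Imφ t : ℝ) : ℂ) from mul_comm _ _]
    push_cast
    ring
  -- conclusion
  intro y hy
  rcases eq_or_lt_of_le hy.1 with h0 | h0
  · have hE10 : E1 0 = 1 := by rw [← hb1 0 ⟨le_refl 0, one_pos⟩, hE00]
    rw [← h0]
    have hT : m1 * Complex.exp (Complex.I *
          ((∫ y' in (0:ℝ)..(0:ℝ), (deriv E1 y').im / (E1 y').re : ℝ) : ℂ)) *
        ((E1 0).re : ℂ) / ((Real.sqrt (1 - 0) : ℝ) : ℂ) = m1 := by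
      rw [intervalIntegral.integral_same, hE10]
      simp
    rw [hT]
    exact hm1
  · have hyI : y ∈ Ioo (0:ℝ) 1 := ⟨h0, hy.2⟩
    have hlim := L1 y hyI
    have hJ : (∫ y' in (0:ℝ)..y, (deriv E1 y').im / (E1 y').re) =
        ∫ t in (0:ℝ)..y, Imφ t := by
      apply intervalIntegral.integral_congr_ae
      apply ae_of_all
      intro t ht
      rw [uIoc_of_le hyI.1.le] at ht
      have htI : t ∈ Ioo (0:ℝ) 1 := ⟨ht.1, lt_of_le_of_lt ht.2 hyI.2⟩
      have hd : deriv E1 t = ((t ^ (-α) : ℝ) : ℂ) * g2 (0, t) := by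
        have hevE : (fun s => E 0 s) =ᶠ[𝓝 t] E1 := by
          filter_upwards [Ioo_mem_nhds htI.1 htI.2] with u hu
          exact hb1 u ⟨hu.1.le, hu.2⟩
        rw [← hevE.deriv_eq]
        exact (hE1d t htI).deriv
      show (deriv E1 t).im / (E1 t).re = Imφ t
      rw [hd, ← hb1 t ⟨htI.1.le, htI.2⟩, Complex.im_ofReal_mul, hImφdef]
      simp only
      ring
    have hval' := hval y hyI
    rw [← hJ, hb1 y hy] at hval'
    rw [hval'] at hlim
    exact hlim






end ErnstAux


namespace ErnstAux

lemma plumbing {n : ℕ} (hn : 2 ≤ n) {E : ℝ → ℝ → ℂ}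
    (hCn : ContDiffOn ℝ n (fun p : ℝ × ℝ => E p.1 p.2) (interior TriD)) :
    (∀ p ∈ interior TriD, HasDerivAt (fun t => E t p.2) (pdx E p.1 p.2) p.1) ∧
    (∀ p ∈ interior TriD, HasDerivAt (fun t => E p.1 t) (pdy E p.1 p.2) p.2) ∧
    (∀ p ∈ interior TriD, HasDerivAt (fun t => pdx E p.1 t) (pdxy E p.1 p.2) p.2) ∧
    (∀ p ∈ interior TriD, HasDerivAt (fun t => pdy E t p.2) (pdxy E p.1 p.2) p.1) := by
  set F : ℝ × ℝ → ℂ := fun p => E p.1 p.2 with hF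
  have hU : IsOpen (interior TriD) := isOpen_interior
  have h1n : (1 : WithTop ℕ∞) ≤ (n : WithTop ℕ∞) := by exact_mod_cast le_trans (by norm_num : 1 ≤ 2) hn
  have hFd : ∀ q ∈ interior TriD, HasFDerivAt F (fderiv ℝ F q) q := by
    intro q hq
    exact ((hCn.contDiffAt (hU.mem_nhds hq)).differentiableAt (by exact_mod_cast (show n ≠ 0 by omega))).hasFDerivAt
  have hLx : ∀ q : ℝ × ℝ, HasDerivAt (fun t : ℝ => ((t, q.2) : ℝ × ℝ)) ((1:ℝ), (0:ℝ)) q.1 :=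
    fun q => (hasDerivAt_id q.1).prodMk (hasDerivAt_const q.1 q.2)
  have hLy : ∀ q : ℝ × ℝ, HasDerivAt (fun t : ℝ => ((q.1, t) : ℝ × ℝ)) ((0:ℝ), (1:ℝ)) q.2 :=
    fun q => (hasDerivAt_const q.2 q.1).prodMk (hasDerivAt_id q.2)
  have hder_x : ∀ q ∈ interior TriD,
      HasDerivAt (fun t => E t q.2) (fderiv ℝ F q ((1:ℝ), (0:ℝ))) q.1 := by
    intro q hq
    have h1 : HasFDerivAt F (fderiv ℝ F q) ((q.1, q.2) : ℝ × ℝ) := by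
      rw [Prod.mk.eta]; exact hFd q hq
    exact h1.comp_hasDerivAt q.1 (hLx q)
  have hder_y : ∀ q ∈ interior TriD,
      HasDerivAt (fun t => E q.1 t) (fderiv ℝ F q ((0:ℝ), (1:ℝ))) q.2 := by
    intro q hq
    have h1 : HasFDerivAt F (fderiv ℝ F q) ((q.1, q.2) : ℝ × ℝ) := by
      rw [Prod.mk.eta]; exact hFd q hq
    exact h1.comp_hasDerivAt q.2 (hLy q)
  have hpdx_eq : ∀ q ∈ interior TriD, pdx E q.1 q.2 = fderiv ℝ F q ((1:ℝ), (0:ℝ)) :=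
    fun q hq => (hder_x q hq).deriv
  have hpdy_eq : ∀ q ∈ interior TriD, pdy E q.1 q.2 = fderiv ℝ F q ((0:ℝ), (1:ℝ)) :=
    fun q hq => (hder_y q hq).deriv
  have P1 : ∀ p ∈ interior TriD, HasDerivAt (fun t => E t p.2) (pdx E p.1 p.2) p.1 :=
    fun p hp => (hpdx_eq p hp) ▸ hder_x p hp
  have P2 : ∀ p ∈ interior TriD, HasDerivAt (fun t => E p.1 t) (pdy E p.1 p.2) p.2 :=
    fun p hp => (hpdy_eq p hp) ▸ hder_y p hp
  refine ⟨P1, P2, ?_⟩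
  -- second derivative data
  have hDd : ∀ q ∈ interior TriD,
      HasFDerivAt (fderiv ℝ F) (fderiv ℝ (fderiv ℝ F) q) q := by
    intro q hq
    have h1 : ContDiffAt ℝ 1 (fderiv ℝ F) q :=
      (hCn.contDiffAt (hU.mem_nhds hq)).fderiv_right
        (by exact_mod_cast hn : (1 : WithTop ℕ∞) + 1 ≤ (n : WithTop ℕ∞))
    exact (h1.differentiableAt one_ne_zero).hasFDerivAt
  have hsymm : ∀ q ∈ interior TriD, ∀ v w : ℝ × ℝ,
      fderiv ℝ (fderiv ℝ F) q v w = fderiv ℝ (fderiv ℝ F) q w v := by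
    intro q hq v w
    exact second_derivative_symmetric_of_eventually
      (Filter.eventually_of_mem (hU.mem_nhds hq) (fun r hr => hFd r hr)) (hDd q hq) v w
  have hev1 : ∀ q ∈ interior TriD, ∀ᶠ t in 𝓝 q.1, ((t, q.2) : ℝ × ℝ) ∈ interior TriD := by
    intro q hq
    have hc : Continuous (fun t : ℝ => ((t, q.2) : ℝ × ℝ)) :=
      continuous_id.prodMk continuous_const
    have : q.1 ∈ (fun t : ℝ => ((t, q.2) : ℝ × ℝ)) ⁻¹' interior TriD := by
      simp only [mem_preimage, Prod.mk.eta]; exact hq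
    exact eventually_of_mem ((hU.preimage hc).mem_nhds this) (fun t ht => ht)
  have hev2 : ∀ q ∈ interior TriD, ∀ᶠ t in 𝓝 q.2, ((q.1, t) : ℝ × ℝ) ∈ interior TriD := by
    intro q hq
    have hc : Continuous (fun t : ℝ => ((q.1, t) : ℝ × ℝ)) :=
      continuous_const.prodMk continuous_id
    have : q.2 ∈ (fun t : ℝ => ((q.1, t) : ℝ × ℝ)) ⁻¹' interior TriD := by
      simp only [mem_preimage, Prod.mk.eta]; exact hq
    exact eventually_of_mem ((hU.preimage hc).mem_nhds this) (fun t ht => ht)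
  have hDva : ∀ q ∈ interior TriD, ∀ v : ℝ × ℝ,
      HasDerivAt (fun t : ℝ => fderiv ℝ F (t, q.2) v)
        ((fderiv ℝ (fderiv ℝ F) q ((1:ℝ), (0:ℝ))) v) q.1 := by
    intro q hq v
    have h0 : HasFDerivAt (fderiv ℝ F) (fderiv ℝ (fderiv ℝ F) q) ((q.1, q.2) : ℝ × ℝ) := by
      rw [Prod.mk.eta]; exact hDd q hq
    have h1 : HasDerivAt (fun t : ℝ => fderiv ℝ F (t, q.2))
        (fderiv ℝ (fderiv ℝ F) q ((1:ℝ), (0:ℝ))) q.1 := h0.comp_hasDerivAt q.1 (hLx q)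
    have h2 := h1.clm_apply (hasDerivAt_const q.1 v)
    simpa using h2
  have hDvb : ∀ q ∈ interior TriD, ∀ v : ℝ × ℝ,
      HasDerivAt (fun t : ℝ => fderiv ℝ F (q.1, t) v)
        ((fderiv ℝ (fderiv ℝ F) q ((0:ℝ), (1:ℝ))) v) q.2 := by
    intro q hq v
    have h0 : HasFDerivAt (fderiv ℝ F) (fderiv ℝ (fderiv ℝ F) q) ((q.1, q.2) : ℝ × ℝ) := by
      rw [Prod.mk.eta]; exact hDd q hq
    have h1 : HasDerivAt (fun t : ℝ => fderiv ℝ F (q.1, t))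
        (fderiv ℝ (fderiv ℝ F) q ((0:ℝ), (1:ℝ))) q.2 := h0.comp_hasDerivAt q.2 (hLy q)
    have h2 := h1.clm_apply (hasDerivAt_const q.2 v)
    simpa using h2
  have P4' : ∀ q ∈ interior TriD, HasDerivAt (fun t => pdy E t q.2)
      ((fderiv ℝ (fderiv ℝ F) q ((1:ℝ), (0:ℝ))) ((0:ℝ), (1:ℝ))) q.1 := by
    intro q hq
    apply (hDva q hq ((0:ℝ), (1:ℝ))).congr_of_eventuallyEq
    filter_upwards [hev1 q hq] with t ht
    exact hpdy_eq (t, q.2) ht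
  have hpdxy_eq : ∀ q ∈ interior TriD,
      pdxy E q.1 q.2 = (fderiv ℝ (fderiv ℝ F) q ((1:ℝ), (0:ℝ))) ((0:ℝ), (1:ℝ)) := by
    intro q hq
    exact (P4' q hq).deriv
  constructor
  · -- P3, with symmetry
    intro p hp
    have h1 : HasDerivAt (fun t => pdx E p.1 t)
        ((fderiv ℝ (fderiv ℝ F) p ((0:ℝ), (1:ℝ))) ((1:ℝ), (0:ℝ))) p.2 := by
      apply (hDvb p hp ((1:ℝ), (0:ℝ))).congr_of_eventuallyEq
      filter_upwards [hev2 p hp] with t ht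
      exact hpdx_eq (p.1, t) ht
    rw [show pdxy E p.1 p.2 = (fderiv ℝ (fderiv ℝ F) p ((0:ℝ), (1:ℝ))) ((1:ℝ), (0:ℝ)) from
      (hpdxy_eq p hp).trans (hsymm p hp _ _)]
    exact h1
  · intro p hp
    rw [hpdxy_eq p hp]
    exact P4' p hp

end ErnstAux


namespace ErnstAux

lemma abs_limit {f : ℝ → ℂ} {α J R S : ℝ} {m : ℂ}
    (h : Tendsto (fun x : ℝ => ((x ^ α : ℝ) : ℂ) * f x) (𝓝[>] 0)
      (𝓝 (m * Complex.exp (Complex.I * (J : ℂ)) * ((R : ℝ) : ℂ) / ((S : ℝ) : ℂ))))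
    (hR : 0 ≤ R) (hS : 0 ≤ S) :
    Tendsto (fun x : ℝ => x ^ α * ‖f x‖) (𝓝[>] 0)
      (𝓝 (‖m‖ * R / S)) := by
  have h1 := (continuous_norm.tendsto _).comp h
  have h2 : ‖m * Complex.exp (Complex.I * (J : ℂ)) * ((R : ℝ) : ℂ) / ((S : ℝ) : ℂ)‖ =
      ‖m‖ * R / S := by
    rw [norm_div, norm_mul, norm_mul, Complex.norm_exp]
    have : (Complex.I * (J : ℂ)).re = 0 := by simp
    rw [this, Real.exp_zero]
    simp [Complex.norm_real, _root_.abs_of_nonneg hR, _root_.abs_of_nonneg hS]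
  rw [h2] at h1
  apply h1.congr'
  filter_upwards [self_mem_nhdsWithin] with x hx
  simp only [Function.comp_apply, norm_mul, Complex.norm_real, Real.norm_eq_abs]
  rw [_root_.abs_of_nonneg (Real.rpow_nonneg (le_of_lt hx) _)]

end ErnstAux


/-- Boundary behavior of the C^n-solution of the Goursat problem for the
hyperbolic Ernst equation (Theorem 4 of the paper). -/
theorem ernst_goursat_boundary_behavior
    (n : ℕ) (hn : 2 ≤ n) (α : ℝ) (hα : α ∈ Ioo (0:ℝ) 1)
    (E0 E1 : ℝ → ℂ) (hd0 : ErnstData n α E0) (hd1 : ErnstData n α E1)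
    (m1 m2 : ℂ)
    (hm1 : Tendsto (fun x : ℝ => ((x ^ α : ℝ) : ℂ) * deriv E0 x) (𝓝[>] 0) (𝓝 m1))
    (hm2 : Tendsto (fun y : ℝ => ((y ^ α : ℝ) : ℂ) * deriv E1 y) (𝓝[>] 0) (𝓝 m2))
    (E : ℝ → ℝ → ℂ) (hE : ErnstSolutionWith n α E E0 E1) :
    (∀ y ∈ Ico (0:ℝ) 1,
      Tendsto (fun x : ℝ => ((x ^ α : ℝ) : ℂ) * pdx E x y) (𝓝[>] 0)
        (𝓝 (m1 * Complex.exp (Complex.I *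
              ((∫ y' in (0:ℝ)..y, (deriv E1 y').im / (E1 y').re : ℝ) : ℂ)) *
            ((E1 y).re : ℂ) / ((Real.sqrt (1 - y) : ℝ) : ℂ))) ∧
      Tendsto (fun x : ℝ => x ^ α * ‖pdx E x y‖) (𝓝[>] 0)
        (𝓝 (‖m1‖ * (E1 y).re / Real.sqrt (1 - y)))) ∧
    (∀ x ∈ Ico (0:ℝ) 1,
      Tendsto (fun y : ℝ => ((y ^ α : ℝ) : ℂ) * pdy E x y) (𝓝[>] 0)
        (𝓝 (m2 * Complex.exp (Complex.I *
              ((∫ x' in (0:ℝ)..x, (deriv E0 x').im / (E0 x').re : ℝ) : ℂ)) *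
            ((E0 x).re : ℂ) / ((Real.sqrt (1 - x) : ℝ) : ℂ))) ∧
      Tendsto (fun y : ℝ => y ^ α * ‖pdy E x y‖) (𝓝[>] 0)
        (𝓝 (‖m2‖ * (E0 x).re / Real.sqrt (1 - x)))) := by
  obtain ⟨hEc, hCn, hPDE0, ⟨G1, hG1c, hG1e⟩, ⟨G2, hG2c, hG2e⟩, ⟨G3, hG3c, hG3e⟩,
    hbx, hby, hpos⟩ := hE
  obtain ⟨P1, P2, P3, P4⟩ := ErnstAux.plumbing hn hCn
  have hE00 : E 0 0 = 1 := by rw [hbx 0 ⟨le_refl 0, one_pos⟩, hd0.2.2.2.1]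
  have hm1' : Tendsto (fun x : ℝ => ((x ^ α : ℝ) : ℂ) * deriv (fun t => E t 0) x)
      (𝓝[>] 0) (𝓝 m1) := by
    apply hm1.congr'
    filter_upwards [Ioo_mem_nhdsGT_of_mem
      (show (0:ℝ) ∈ Ico (0:ℝ) 1 from ⟨le_refl 0, one_pos⟩)] with x hx
    congr 1
    apply Filter.EventuallyEq.deriv_eq
    filter_upwards [Ioo_mem_nhds hx.1 hx.2] with u hu
    exact (hbx u ⟨hu.1.le, hu.2⟩).symm
  have hm2' : Tendsto (fun y : ℝ => ((y ^ α : ℝ) : ℂ) * deriv (fun t => E 0 t) y)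
      (𝓝[>] 0) (𝓝 m2) := by
    apply hm2.congr'
    filter_upwards [Ioo_mem_nhdsGT_of_mem
      (show (0:ℝ) ∈ Ico (0:ℝ) 1 from ⟨le_refl 0, one_pos⟩)] with y hy
    congr 1
    apply Filter.EventuallyEq.deriv_eq
    filter_upwards [Ioo_mem_nhds hy.1 hy.2] with u hu
    exact (hby u ⟨hu.1.le, hu.2⟩).symm
  have part1 := ErnstAux.master hα hEc P1 P2 P3 (fun p hp => hPDE0 p hp)
    hG1c hG1e hG2c hG2e hG3c hG3e hpos hE00 hm1' hby
  -- swapped data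
  have hEc' : ContinuousOn (fun p : ℝ × ℝ => E p.2 p.1) TriD :=
    hEc.comp continuous_swap.continuousOn (fun p hp => ErnstAux.swap_TriD hp)
  have hPDET : ∀ p ∈ interior TriD,
      (((E p.2 p.1).re : ℂ)) * (pdxy E p.2 p.1 -
        (pdy E p.2 p.1 + pdx E p.2 p.1) / (2 * (1 - (p.1 : ℂ) - (p.2 : ℂ)))) =
      pdy E p.2 p.1 * pdx E p.2 p.1 := by
    intro p hp
    have h := hPDE0 (p.2, p.1) (ErnstAux.swap_intTriD hp)
    unfold ErnstEqAt at h
    simp only at h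
    linear_combination h
  have hposT : ∀ p ∈ TriD, 0 < (E p.2 p.1).re := fun p hp =>
    hpos (p.2, p.1) (ErnstAux.swap_TriD hp)
  have part2 := ErnstAux.master hα (E := fun a b => E b a) (M := fun x y => pdxy E y x)
    (g1 := fun p => G2 (p.2, p.1)) (g2 := fun p => G1 (p.2, p.1))
    (g3 := fun p => G3 (p.2, p.1)) (m1 := m2) (E1 := E0) hEc'
    (fun p hp => P2 (p.2, p.1) (ErnstAux.swap_intTriD hp))
    (fun p hp => P1 (p.2, p.1) (ErnstAux.swap_intTriD hp))
    (fun p hp => P4 (p.2, p.1) (ErnstAux.swap_intTriD hp))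
    hPDET
    (hG2c.comp continuous_swap.continuousOn (fun p hp => ErnstAux.swap_TriD hp))
    (fun p hp => hG2e (p.2, p.1) (ErnstAux.swap_intTriD hp))
    (hG1c.comp continuous_swap.continuousOn (fun p hp => ErnstAux.swap_TriD hp))
    (fun p hp => hG1e (p.2, p.1) (ErnstAux.swap_intTriD hp))
    (hG3c.comp continuous_swap.continuousOn (fun p hp => ErnstAux.swap_TriD hp))
    (fun p hp => by
      show G3 (p.2, p.1) = ((p.1 ^ α * p.2 ^ α : ℝ) : ℂ) * pdxy E p.2 p.1
      have h3 := hG3e (p.2, p.1) (ErnstAux.swap_intTriD hp)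
      simp only at h3
      rw [h3]
      push_cast
      ring)
    hposT hE00 hm2' (fun y hy => hbx y hy)
  constructor
  · intro y hy
    refine ⟨part1 y hy, ?_⟩
    exact ErnstAux.abs_limit (part1 y hy) (hd1.2.2.2.2 y hy).le (Real.sqrt_nonneg _)
  · intro x hx
    refine ⟨part2 x hx, ?_⟩
    exact ErnstAux.abs_limit (part2 x hx) (hd0.2.2.2.2 x hx).le (Real.sqrt_nonneg _)
end
end

section
/- Let Ω ⊂ {(x,y) ∈ ℝ² : 0 < x, 0 < y, x + y < 1} be open and let V : Ω → ℝ be C². Then the following are equivalent: (i) V satisfies the Euler–Darboux equation on Ω; (ii) for every k ∈ ℂ ∖ [0,1], the compatibility condition ∂_y(λ(x,y,k) V_x(x,y)) = ∂_x(λ(x,y,k)^{-1} V_y(x,y)) of the linear Lax pair holds at every point of Ω. -/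
open Complex Set MeasureTheory Topology Filter ComplexConjugate

noncomputable section

lemma aux_cpow_deriv {r : ℝ → ℂ} {r' : ℂ} {c : ℂ} {t : ℝ}
    (h : HasDerivAt r r' t) (h0 : r t ∈ Complex.slitPlane) :
    HasDerivAt (fun s => r s ^ c) (c * r t ^ (c - 1) * r') t := by
  have h1 := (Complex.hasStrictDerivAt_cpow_const (c := c) h0).hasDerivAt
  have h2 := (h1.hasFDerivAt.restrictScalars ℝ).comp_hasDerivAt t h
  simpa [mul_comm, mul_left_comm, Function.comp_def] using h2

lemma aux_inv_deriv {c : ℝ → ℂ} {c' : ℂ} {t : ℝ} (hc : HasDerivAt c c' t) (h0 : c t ≠ 0) :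
    HasDerivAt (fun s => (c s)⁻¹) (-c' / c t ^ 2) t := by
  have h2 := ((hasDerivAt_inv h0).hasFDerivAt.restrictScalars ℝ).comp_hasDerivAt t hc
  exact ((hasDerivAt_inv h0).comp t hc).congr_deriv (by ring : -(c t ^ 2)⁻¹ * c' = -c' / c t ^ 2)

lemma key_lemma
    (Ω : Set (ℝ × ℝ)) (hΩ : IsOpen Ω)
    (hsub : Ω ⊆ {p : ℝ × ℝ | 0 < p.1 ∧ 0 < p.2 ∧ p.1 + p.2 < 1})
    (V : ℝ → ℝ → ℝ)
    (hV : ContDiffOn ℝ 2 (fun p : ℝ × ℝ => V p.1 p.2) Ω)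
    (x y : ℝ) (hp : (x, y) ∈ Ω) (k : ℂ) (hk : k ∉ seg01) :
    (pdy (fun a b => lam a b k * (pdxR V a b : ℂ)) x y =
      pdx (fun a b => (lam a b k)⁻¹ * (pdyR V a b : ℂ)) x y) ↔
    EulerDarbouxAt V x y := by
  obtain ⟨hx, hy, hxy⟩ := hsub hp
  simp only [Set.mem_setOf_eq] at hx hy hxy
  -- nonvanishing facts
  have hmemx : ((x : ℂ)) ∈ seg01 := ⟨x, ⟨le_of_lt hx, by linarith⟩, rfl⟩
  have hmemy : (((1 - y : ℝ)) : ℂ) ∈ seg01 := ⟨1 - y, ⟨by linarith, by linarith⟩, rfl⟩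
  have hkx : k - (x : ℂ) ≠ 0 := by
    intro h; apply hk; rw [sub_eq_zero] at h; rw [h]; exact hmemx
  have hky : k - (1 - (y : ℂ)) ≠ 0 := by
    intro h; apply hk; rw [sub_eq_zero] at h; rw [h]
    simpa using hmemy
  set r : ℂ := (k - (1 - (y : ℂ))) / (k - (x : ℂ)) with hr_def
  have hr0 : r ≠ 0 := div_ne_zero hky hkx
  have hslit : r ∈ Complex.slitPlane := by
    rw [Complex.mem_slitPlane_iff]
    by_cases him : k.im = 0
    · left
      have hkre : k.re < 0 ∨ 1 < k.re := by
        by_contra hcon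
        push_neg at hcon
        exact hk ⟨k.re, ⟨hcon.1, hcon.2⟩, by
          apply Complex.ext <;> simp [him]⟩
      have hb : Complex.normSq (k - (x:ℂ)) = (k.re - x)^2 := by
        simp [Complex.normSq_apply, Complex.sub_re, Complex.sub_im, him]; ring
      have : r.re = ((k.re - (1-y)) * (k.re - x)) / (k.re - x)^2 := by
        rw [hr_def, Complex.div_re, hb]
        simp [Complex.sub_re, Complex.sub_im, him]
        try ring
      rw [this]
      have hne : (k.re - x) ≠ 0 := by rcases hkre with h|h <;> intro hc <;> nlinarith
      apply div_pos
      · rcases hkre with h|h <;> nlinarith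
      · positivity
    · right
      have : r.im = (k.im * (1 - x - y)) / Complex.normSq (k - (x:ℂ)) := by
        rw [hr_def, Complex.div_im]
        simp [Complex.sub_re, Complex.sub_im]
        try ring
      rw [this]
      have h2 : Complex.normSq (k - (x:ℂ)) ≠ 0 := by
        simpa [Complex.normSq_eq_zero] using hkx
      exact div_ne_zero (mul_ne_zero him (by intro hc; nlinarith)) h2
  set L : ℂ := lam x y k with hL_def
  have hLr : L = r ^ (1/2 : ℂ) := rfl
  have hL2 : L * L = r := by
    rw [hLr, ← Complex.cpow_add _ _ hr0]
    norm_num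
  have hL0 : L ≠ 0 := by
    intro h
    rw [h, mul_zero] at hL2
    exact hr0 hL2.symm
  have hL2' : L * L * (k - (x:ℂ)) = k - (1 - (y:ℂ)) := by
    rw [hL2, hr_def, div_mul_cancel₀ _ hkx]
  -- derivative machinery
  have hC : ContDiffAt ℝ 2 (fun p : ℝ × ℝ => V p.1 p.2) (x, y) := hV.contDiffAt (hΩ.mem_nhds hp)
  set F : ℝ × ℝ → ℝ := fun p => V p.1 p.2 with hF_def
  set G : ℝ × ℝ → (ℝ × ℝ) →L[ℝ] ℝ := fderiv ℝ F with hG_def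
  have hG1 : ContDiffAt ℝ 1 G (x, y) := hC.fderiv_right (by norm_num)
  have hGdiff : DifferentiableAt ℝ G (x, y) := hG1.differentiableAt (by norm_num)
  have hdiffOn : ∀ q ∈ Ω, DifferentiableAt ℝ F q := fun q hq =>
    ((hV.differentiableOn (by norm_num)) q hq).differentiableAt (hΩ.mem_nhds hq)
  have hpdx : ∀ q ∈ Ω, (pdxR V q.1 q.2) = G q (1, 0) := by
    intro q hq
    exact ((hdiffOn q hq).hasFDerivAt.comp_hasDerivAt q.1
      ((hasDerivAt_id q.1).prodMk (hasDerivAt_const q.1 q.2))).deriv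
  have hpdy : ∀ q ∈ Ω, (pdyR V q.1 q.2) = G q (0, 1) := by
    intro q hq
    exact ((hdiffOn q hq).hasFDerivAt.comp_hasDerivAt q.2
      ((hasDerivAt_const q.2 q.1).prodMk (hasDerivAt_id q.2))).deriv
  set MR : ℝ := fderiv ℝ G (x, y) (1, 0) (0, 1) with hMR_def
  have hsymm : fderiv ℝ G (x, y) (0, 1) (1, 0) = MR :=
    (hC.isSymmSndFDerivAt (by norm_num)) (0, 1) (1, 0)
  have hevx : ∀ᶠ a in 𝓝 x, (a, y) ∈ Ω := by
    have hc : Continuous (fun a : ℝ => (a, y)) := by fun_prop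
    exact hc.continuousAt.preimage_mem_nhds (hΩ.mem_nhds hp)
  have hevy : ∀ᶠ b in 𝓝 y, (x, b) ∈ Ω := by
    have hc : Continuous (fun b : ℝ => (x, b)) := by fun_prop
    exact hc.continuousAt.preimage_mem_nhds (hΩ.mem_nhds hp)
  have hMyx : HasDerivAt (fun a => pdyR V a y) MR x := by
    have hGx : HasDerivAt (fun a => G (a, y)) (fderiv ℝ G (x, y) (1, 0)) x :=
      hGdiff.hasFDerivAt.comp_hasDerivAt x ((hasDerivAt_id x).prodMk (hasDerivAt_const x y))
    have hGxa : HasDerivAt (fun a => G (a, y) (0, 1)) MR x := by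
      simpa using hGx.clm_apply (hasDerivAt_const x ((0:ℝ), (1:ℝ)))
    apply hGxa.congr_of_eventuallyEq
    filter_upwards [hevx] with a ha
    exact hpdy (a, y) ha
  have hMxy : HasDerivAt (fun b => pdxR V x b) MR y := by
    have hGy : HasDerivAt (fun b => G (x, b)) (fderiv ℝ G (x, y) (0, 1)) y :=
      hGdiff.hasFDerivAt.comp_hasDerivAt y ((hasDerivAt_const y x).prodMk (hasDerivAt_id y))
    have hGya : HasDerivAt (fun b => G (x, b) (1, 0)) MR y := by
      rw [← hsymm]
      simpa using hGy.clm_apply (hasDerivAt_const y ((1:ℝ), (0:ℝ)))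
    apply hGya.congr_of_eventuallyEq
    filter_upwards [hevy] with b hb
    exact hpdx (x, b) hb
  have hpdxy : pdxyR V x y = MR := hMyx.deriv
  set VxR : ℝ := pdxR V x y with hVxR_def
  set VyR : ℝ := pdyR V x y with hVyR_def
  -- lam derivatives
  have hbase_y : HasDerivAt (fun b : ℝ => (k - (1 - (b : ℂ))) / (k - (x : ℂ)))
      ((k - (x : ℂ))⁻¹) y := by
    have h1 : HasDerivAt (fun b : ℝ => ((b : ℝ) : ℂ)) 1 y := by
      simpa using (hasDerivAt_id y).ofReal_comp
    have h3 := (((hasDerivAt_const y k).sub ((hasDerivAt_const y (1 : ℂ)).sub h1)).div_const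
      (k - (x : ℂ)))
    simpa [one_div] using h3
  have hpow : ((k - (1 - (y : ℂ))) / (k - (x : ℂ))) ^ ((1/2 : ℂ) - 1) = L⁻¹ := by
    rw [show (1/2 : ℂ) - 1 = -(1/2) by norm_num, Complex.cpow_neg, ← hr_def, ← hLr]
  have Hlam_y : HasDerivAt (fun b => lam x b k)
      ((1/2 : ℂ) * L⁻¹ * (k - (x : ℂ))⁻¹) y := by
    have h := aux_cpow_deriv (c := (1/2 : ℂ)) hbase_y hslit
    rw [hpow] at h
    simpa only [lam] using h
  have hbase_x : HasDerivAt (fun a : ℝ => (k - (1 - (y : ℂ))) / (k - (a : ℂ)))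
      ((k - (1 - (y : ℂ))) / (k - (x : ℂ)) ^ 2) x := by
    have h1 : HasDerivAt (fun a : ℝ => ((a : ℝ) : ℂ)) 1 x := by
      simpa using (hasDerivAt_id x).ofReal_comp
    have hden : HasDerivAt (fun a : ℝ => k - ((a : ℝ) : ℂ)) (0 - 1) x :=
      (hasDerivAt_const x k).sub h1
    have h := (hasDerivAt_const x (k - (1 - (y : ℂ)))).div hden hkx
    exact h.congr_deriv (by ring)
  have Hlam_x : HasDerivAt (fun a => lam a y k)
      ((1/2 : ℂ) * L⁻¹ * ((k - (1 - (y : ℂ))) / (k - (x : ℂ)) ^ 2)) x := by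
    have h := aux_cpow_deriv (c := (1/2 : ℂ)) hbase_x hslit
    rw [hpow] at h
    simpa only [lam] using h
  have hL0' : lam x y k ≠ 0 := by rw [← hL_def]; exact hL0
  have Hlaminv_x : HasDerivAt (fun a => (lam a y k)⁻¹)
      (-((1/2 : ℂ) * L⁻¹ * ((k - (1 - (y : ℂ))) / (k - (x : ℂ)) ^ 2)) / L ^ 2) x := by
    have h := aux_inv_deriv Hlam_x (by exact hL0)
    simpa only [← hL_def] using h
  -- the two sides of the compatibility condition
  have hLHS : pdy (fun a b => lam a b k * ((pdxR V a b : ℝ) : ℂ)) x y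
      = (1/2 : ℂ) * L⁻¹ * (k - (x : ℂ))⁻¹ * (VxR : ℂ) + L * (MR : ℂ) := by
    have h := (Hlam_y.mul hMxy.ofReal_comp).deriv
    simp only [← hL_def, ← hVxR_def, Pi.mul_def] at h
    exact h
  have hRHS : pdx (fun a b => (lam a b k)⁻¹ * ((pdyR V a b : ℝ) : ℂ)) x y
      = -((1/2 : ℂ) * L⁻¹ * ((k - (1 - (y : ℂ))) / (k - (x : ℂ)) ^ 2)) / L ^ 2 * (VyR : ℂ)
        + L⁻¹ * (MR : ℂ) := by
    have h := (Hlaminv_x.mul hMyx.ofReal_comp).deriv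
    simp only [← hL_def, ← hVyR_def, Pi.mul_def] at h
    exact h
  have hcoef : -((1/2 : ℂ) * L⁻¹ * ((k - (1 - (y : ℂ))) / (k - (x : ℂ)) ^ 2)) / L ^ 2
      = -((1/2 : ℂ) * L⁻¹ * (k - (x : ℂ))⁻¹) := by
    rw [show k - (1 - (y : ℂ)) = L * L * (k - (x : ℂ)) from hL2'.symm]
    obtain ⟨e, he⟩ : ∃ e, k - (x : ℂ) = e := ⟨_, rfl⟩
    have he0 : e ≠ 0 := he ▸ hkx
    rw [he]
    have hL1 : L⁻¹ * L = 1 := inv_mul_cancel₀ hL0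
    have he1 : e⁻¹ * e = 1 := inv_mul_cancel₀ he0
    linear_combination (-(1/2 : ℂ) * (L⁻¹ ^ 2 * L * e * e⁻¹ ^ 2 + L⁻¹ * e * e⁻¹ ^ 2)) * hL1
      + (-(1/2 : ℂ) * (L⁻¹ * e⁻¹)) * he1
  rw [hLHS, hRHS, hcoef]
  have h1xy : (0:ℝ) < 1 - x - y := by linarith
  have h2xy : (2:ℝ) * (1 - x - y) ≠ 0 := by positivity
  have hED : EulerDarbouxAt V x y ↔
      ((VxR : ℂ) + (VyR : ℂ) - 2 * (1 - (x : ℂ) - (y : ℂ)) * (MR : ℂ) = 0) := by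
    unfold EulerDarbouxAt
    rw [hpdxy, ← hVxR_def, ← hVyR_def,
      show ((VxR : ℂ) + (VyR : ℂ) - 2 * (1 - (x : ℂ) - (y : ℂ)) * (MR : ℂ)) =
        (((VxR + VyR - 2 * (1 - x - y) * MR : ℝ)) : ℂ) from by push_cast; ring,
      Complex.ofReal_eq_zero]
    constructor <;> intro h
    · rw [sub_eq_zero, eq_div_iff h2xy] at h
      linear_combination -h
    · rw [sub_eq_zero, eq_div_iff h2xy]
      linear_combination -h
  have hpre : L⁻¹ * (k - (x : ℂ))⁻¹ / 2 ≠ 0 :=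
    div_ne_zero (mul_ne_zero (inv_ne_zero hL0) (inv_ne_zero hkx)) two_ne_zero
  have hfact : ((1/2 : ℂ) * L⁻¹ * (k - (x : ℂ))⁻¹ * (VxR : ℂ) + L * (MR : ℂ)) -
      (-((1/2 : ℂ) * L⁻¹ * (k - (x : ℂ))⁻¹) * (VyR : ℂ)
        + L⁻¹ * (MR : ℂ))
      = (L⁻¹ * (k - (x : ℂ))⁻¹ / 2) *
        ((VxR : ℂ) + (VyR : ℂ) - 2 * ((k - (x : ℂ)) - (k - (1 - (y : ℂ)))) * (MR : ℂ)) := by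
    rw [show k - (1 - (y : ℂ)) = L * L * (k - (x : ℂ)) from hL2'.symm]
    obtain ⟨e, he⟩ : ∃ e, k - (x : ℂ) = e := ⟨_, rfl⟩
    have he0 : e ≠ 0 := he ▸ hkx
    rw [he]
    have hL1 : L⁻¹ * L = 1 := inv_mul_cancel₀ hL0
    have he1 : e⁻¹ * e = 1 := inv_mul_cancel₀ he0
    linear_combination (-(L * (MR : ℂ))) * hL1
      + (L⁻¹ * (MR : ℂ) - L⁻¹ * L ^ 2 * (MR : ℂ)) * he1
  rw [hED, ← sub_eq_zero, hfact,
    show (2 : ℂ) * ((k - (x : ℂ)) - (k - (1 - (y : ℂ)))) = 2 * (1 - (x : ℂ) - (y : ℂ)) from by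
      ring,
    mul_eq_zero]
  exact or_iff_right hpre

/-- The Euler–Darboux equation is equivalent to the compatibility condition
∂_y(λ V_x) = ∂_x(λ⁻¹ V_y) of its linear Lax pair, for every spectral parameter
k ∈ ℂ ∖ [0,1]. -/
theorem eulerDarboux_iff_lax_compatibility
    (Ω : Set (ℝ × ℝ)) (hΩ : IsOpen Ω)
    (hsub : Ω ⊆ {p : ℝ × ℝ | 0 < p.1 ∧ 0 < p.2 ∧ p.1 + p.2 < 1})
    (V : ℝ → ℝ → ℝ)
    (hV : ContDiffOn ℝ 2 (fun p : ℝ × ℝ => V p.1 p.2) Ω) :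
    (∀ p ∈ Ω, EulerDarbouxAt V p.1 p.2) ↔
    (∀ k ∉ seg01, ∀ p ∈ Ω,
      pdy (fun a b => lam a b k * (pdxR V a b : ℂ)) p.1 p.2 =
      pdx (fun a b => (lam a b k)⁻¹ * (pdyR V a b : ℂ)) p.1 p.2) := by
  constructor
  · intro h k hk p hp
    exact (key_lemma Ω hΩ hsub V hV p.1 p.2 hp k hk).mpr (h p hp)
  · intro h p hp
    have h2 : (2 : ℂ) ∉ seg01 := by
      rintro ⟨t, ht, hteq⟩
      simp only at hteq
      have ht2 : t = 2 := by exact_mod_cast hteq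
      rw [ht2] at ht
      linarith [ht.2]
    exact (key_lemma Ω hΩ hsub V hV p.1 p.2 hp 2 h2).mp (h 2 h2 p hp)
end
end

section
/- Let n ≥ 2 be an integer and α ∈ [0,1), and let ℰ0 : [0,1) → ℂ satisfy: ℰ0 ∈ C([0,1)) ∩ C^n((0,1)); x^α ℰ0'(x) extends continuously to [0,1); ℰ0(0) = 1; Re ℰ0 > 0 on [0,1). Then the unique continuous function Ψ : [0,1) → ℂ^{2×2} satisfying Ψ(x) = I + ∫_0^x (1/(2 Re ℰ0(x'))) [[conj(ℰ0'(x')), conj(ℰ0'(x'))],[ℰ0'(x'), ℰ0'(x')]] Ψ(x') dx' is given by Ψ(x) = (1/2) [[conj(ℰ0(x)), 1],[ℰ0(x), −1]] · [[1, 1],[1, −1]] for all x ∈ [0,1). -/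
open Complex Set MeasureTheory Topology Filter ComplexConjugate

noncomputable section

/-- The explicit matrix (1/2)[[conj ℰ0(x), 1],[ℰ0(x), −1]]·[[1,1],[1,−1]]. -/
def PsiInf (E0 : ℝ → ℂ) (x : ℝ) : Matrix (Fin 2) (Fin 2) ℂ :=
  (1/2 : ℂ) • (!![conj (E0 x), 1; E0 x, -1] * !![1, 1; 1, -1])

/-- The coefficient matrix of the x-part of the Lax pair with λ ≡ 1. -/
def U0inf (E0 : ℝ → ℂ) (x : ℝ) : Matrix (Fin 2) (Fin 2) ℂ :=
  (1 / (2 * ((E0 x).re : ℂ))) •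
    !![conj (deriv E0 x), conj (deriv E0 x); deriv E0 x, deriv E0 x]


/-- constancy helper -/
lemma const_of_deriv_zero {f : ℝ → ℂ} (hc : ContinuousOn f (Ico 0 1))
    (hd : ∀ x ∈ Ioo (0:ℝ) 1, HasDerivAt f 0 x) :
    ∀ x ∈ Ico (0:ℝ) 1, f x = f 0 := by
  intro x hx
  rcases eq_or_lt_of_le hx.1 with h | h
  · rw [← h]
  have hsub : Ioc (0:ℝ) x ⊆ Ico 0 1 := fun t ht => ⟨ht.1.le, lt_of_le_of_lt ht.2 hx.2⟩
  have key : ∀ ε ∈ Ioc (0:ℝ) x, f x = f ε := by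
    intro ε hε
    have hsub2 : Icc ε x ⊆ Ioo (0:ℝ) 1 :=
      fun t ht => ⟨lt_of_lt_of_le hε.1 ht.1, lt_of_le_of_lt ht.2 hx.2⟩
    have := constant_of_has_deriv_right_zero (f := f) (a := ε) (b := x)
      (hc.mono fun t ht => ⟨(hsub2 ht).1.le, (hsub2 ht).2⟩)
      (fun y hy => (hd y (hsub2 ⟨hy.1, hy.2.le⟩)).hasDerivWithinAt)
    exact this x (right_mem_Icc.2 hε.2)
  have hne : (𝓝[Ioc (0:ℝ) x] 0).NeBot := by
    refine mem_closure_iff_nhdsWithin_neBot.1 ?_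
    rw [closure_Ioc h.ne]
    exact ⟨le_refl 0, h.le⟩
  have t1 : Tendsto f (𝓝[Ioc (0:ℝ) x] 0) (𝓝 (f 0)) :=
    (hc 0 ⟨le_refl _, one_pos⟩).mono_left (nhdsWithin_mono _ hsub)
  have t2 : Tendsto f (𝓝[Ioc (0:ℝ) x] 0) (𝓝 (f x)) := by
    refine Tendsto.congr' ?_ tendsto_const_nhds
    filter_upwards [self_mem_nhdsWithin] with ε hε
    exact key ε hε
  exact tendsto_nhds_unique t2 t1

/-- The unique continuous solution of the Volterra equation obtained from
the x-part of the Lax pair with λ ≡ 1 is Ψ(x) = (1/2)[[conj ℰ0, 1],[ℰ0, −1]]·[[1,1],[1,−1]]. -/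
theorem volterra_xpart_at_infinity
    (n : ℕ) (hn : 2 ≤ n) (α : ℝ) (hα : α ∈ Ico (0:ℝ) 1)
    (E0 : ℝ → ℂ) (hd0 : ErnstData n α E0) :
    (ContinuousOn (fun x : ℝ => PsiInf E0 x) (Ico 0 1) ∧
      ∀ x ∈ Ico (0:ℝ) 1, ∀ i j,
        PsiInf E0 x i j =
          (1 : Matrix (Fin 2) (Fin 2) ℂ) i j +
            ∫ t in (0:ℝ)..x, (U0inf E0 t * PsiInf E0 t) i j) ∧
    (∀ Ψ : ℝ → Matrix (Fin 2) (Fin 2) ℂ, ContinuousOn Ψ (Ico 0 1) →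
      (∀ x ∈ Ico (0:ℝ) 1, ∀ i j, Ψ x i j =
        (1 : Matrix (Fin 2) (Fin 2) ℂ) i j +
          ∫ t in (0:ℝ)..x, (U0inf E0 t * Ψ t) i j) →
      ∀ x ∈ Ico (0:ℝ) 1, Ψ x = PsiInf E0 x) := by
  obtain ⟨hE0c, hE0s, ⟨g, hgc, hgd⟩, hE00, hre⟩ := hd0
  have hsubIcc : ∀ {x : ℝ}, x ∈ Ico (0:ℝ) 1 → Icc (0:ℝ) x ⊆ Ico (0:ℝ) 1 :=
    fun {x} hx t ht => ⟨ht.1, lt_of_le_of_lt ht.2 hx.2⟩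
  have hn1 : (1 : WithTop ℕ∞) ≤ (n : WithTop ℕ∞) := by exact_mod_cast le_trans (by norm_num) hn
  have hder : ∀ t ∈ Ioo (0:ℝ) 1, HasDerivAt E0 (deriv E0 t) t := fun t ht =>
    ((hE0s.contDiffAt (isOpen_Ioo.mem_nhds ht)).differentiableAt (lt_of_lt_of_le zero_lt_one hn1).ne').hasDerivAt
  have hdc : ContinuousOn (deriv E0) (Ioo 0 1) :=
    hE0s.continuousOn_deriv_of_isOpen isOpen_Ioo hn1
  have hrneC : ∀ t ∈ Ico (0:ℝ) 1, (((E0 t).re : ℂ)) ≠ 0 := fun t ht =>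
    Complex.ofReal_ne_zero.2 (ne_of_gt (hre t ht))
  have hrc : ContinuousOn (fun t : ℝ => (((E0 t).re : ℝ) : ℂ)) (Ico 0 1) :=
    Complex.continuous_ofReal.comp_continuousOn (Complex.continuous_re.comp_continuousOn hE0c)
  have hqc : ContinuousOn (fun t : ℝ => 1 / (2 * (((E0 t).re : ℝ) : ℂ))) (Ico 0 1) :=
    continuousOn_const.div (continuousOn_const.mul hrc)
      (fun t ht => mul_ne_zero two_ne_zero (hrneC t ht))
  -- master integrability
  have hmaster : ∀ ψ : ℝ → ℂ, ContinuousOn ψ (Ico 0 1) → ∀ x ∈ Ico (0:ℝ) 1,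
      IntervalIntegrable (fun t => ((t ^ (-α) : ℝ) : ℂ) * ψ t) volume 0 x := by
    intro ψ hψ x hx
    have h0 : IntervalIntegrable (fun t : ℝ => t ^ (-α)) volume 0 x :=
      intervalIntegral.intervalIntegrable_rpow' (by linarith [hα.2])
    have h1 : IntervalIntegrable (fun t : ℝ => ((t ^ (-α) : ℝ) : ℂ)) volume 0 x :=
      ⟨h0.1.ofReal, h0.2.ofReal⟩
    exact h1.mul_continuousOn (hψ.mono (by rw [uIcc_of_le hx.1] ; exact hsubIcc hx))
  have hdformula : ∀ t ∈ Ioo (0:ℝ) 1, deriv E0 t = ((t ^ (-α) : ℝ) : ℂ) * g t := by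
    intro t ht
    have hgt := hgd t ht
    have htne : ((t ^ α : ℝ) : ℂ) ≠ 0 := by
      exact_mod_cast (Real.rpow_pos_of_pos ht.1 α).ne'
    rw [hgt, Real.rpow_neg ht.1.le]
    push_cast
    field_simp
  have hd_int : ∀ ψ : ℝ → ℂ, ContinuousOn ψ (Ico 0 1) → ∀ x ∈ Ico (0:ℝ) 1,
      IntervalIntegrable (fun t => deriv E0 t * ψ t) volume 0 x := by
    intro ψ hψ x hx
    have h1 := hmaster (fun t => g t * ψ t) (hgc.mul hψ) x hx
    rw [intervalIntegrable_iff_integrableOn_Ioc_of_le hx.1] at h1 ⊢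
    refine h1.congr_fun (fun t ht => ?_) measurableSet_Ioc
    have ht1 : t ∈ Ioo (0:ℝ) 1 := ⟨ht.1, lt_of_le_of_lt ht.2 hx.2⟩
    simp only [hdformula t ht1] ; ring
  have hcd_int : ∀ ψ : ℝ → ℂ, ContinuousOn ψ (Ico 0 1) → ∀ x ∈ Ico (0:ℝ) 1,
      IntervalIntegrable (fun t => conj (deriv E0 t) * ψ t) volume 0 x := by
    intro ψ hψ x hx
    have h1 := hmaster (fun t => conj (g t) * ψ t)
      ((continuous_star.comp_continuousOn hgc).mul hψ) x hx
    rw [intervalIntegrable_iff_integrableOn_Ioc_of_le hx.1] at h1 ⊢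
    refine h1.congr_fun (fun t ht => ?_) measurableSet_Ioc
    have ht1 : t ∈ Ioo (0:ℝ) 1 := ⟨ht.1, lt_of_le_of_lt ht.2 hx.2⟩
    simp only [hdformula t ht1, map_mul, Complex.conj_ofReal]
    ring
  -- entry formulas
  have hpsi_apply : ∀ (t : ℝ) (i j : Fin 2), PsiInf E0 t i j =
      (if i = 0 then conj (E0 t) else E0 t) / 2 + (if i = j then (1:ℂ)/2 else -(1/2)) := by
    intro t i j
    fin_cases i <;> fin_cases j <;>
      simp [PsiInf, Matrix.mul_apply, Fin.sum_univ_two] <;> ring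
  have hU_apply : ∀ (M : Matrix (Fin 2) (Fin 2) ℂ) (t : ℝ) (i j : Fin 2),
      (U0inf E0 t * M) i j = (if i = 0 then conj (deriv E0 t) else deriv E0 t) *
        ((1 / (2 * (((E0 t).re : ℝ) : ℂ))) * (M 0 j + M 1 j)) := by
    intro M t i j
    fin_cases i <;>
      simp [U0inf, Matrix.mul_apply, Fin.sum_univ_two, Matrix.smul_apply] <;> ring
  have hcol : ∀ (t : ℝ) (j : Fin 2), PsiInf E0 t 0 j + PsiInf E0 t 1 j = (((E0 t).re : ℝ) : ℂ) := by
    intro t j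
    have h2 : E0 t + conj (E0 t) = 2 * (((E0 t).re : ℝ) : ℂ) := by
      rw [Complex.add_conj] ; push_cast ; ring
    simp only [hpsi_apply]
    fin_cases j <;> simp <;> linear_combination h2 / 2
  have hpsi0 : PsiInf E0 0 = 1 := by
    ext i j
    rw [hpsi_apply, hE00]
    fin_cases i <;> fin_cases j <;> simp [Matrix.one_apply] <;> norm_num
  -- part 1 : continuity
  have hPc : ContinuousOn (fun x : ℝ => PsiInf E0 x) (Ico 0 1) := by
    apply continuousOn_pi.2
    intro i
    apply continuousOn_pi.2
    intro j
    have : (fun x : ℝ => PsiInf E0 x i j) =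
        fun x => (if i = 0 then conj (E0 x) else E0 x) / 2 + (if i = j then (1:ℂ)/2 else -(1/2)) :=
      funext fun x => hpsi_apply x i j
    rw [show (fun x : ℝ => PsiInf E0 x i j) = _ from this]
    apply ContinuousOn.add _ continuousOn_const
    apply ContinuousOn.div_const
    rcases eq_or_ne i 0 with hi | hi
    · simpa [hi, Function.comp_def] using (continuous_star.comp_continuousOn hE0c)
    · simpa [hi] using hE0c
  have hPec : ∀ i j : Fin 2, ContinuousOn (fun t : ℝ => PsiInf E0 t i j) (Ico 0 1) :=
    fun i j => (continuous_apply j).comp_continuousOn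
      ((continuous_apply i).comp_continuousOn hPc)
  -- derivative of entries
  have hPder : ∀ (i j : Fin 2), ∀ t ∈ Ioo (0:ℝ) 1,
      HasDerivAt (fun u => PsiInf E0 u i j)
        ((if i = 0 then conj (deriv E0 t) else deriv E0 t) * (1/2 : ℂ)) t := by
    intro i j t ht
    have h0 : (fun u : ℝ => PsiInf E0 u i j) =
        fun u => (if i = 0 then conj (E0 u) else E0 u) / 2 + (if i = j then (1:ℂ)/2 else -(1/2)) :=
      funext fun u => hpsi_apply u i j
    rw [h0]
    rcases eq_or_ne i 0 with hi | hi
    · subst hi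
      simp only [if_pos rfl, starRingEnd_apply]
      have := ((hder t ht).star.div_const 2).add_const (if (0:Fin 2) = j then (1:ℂ)/2 else -(1/2))
      refine this.congr_deriv (Eq.symm ?_)
      simp
      ring_nf
    · simp only [if_neg hi]
      have := ((hder t ht).div_const 2).add_const (if i = j then (1:ℂ)/2 else -(1/2))
      refine this.congr_deriv (Eq.symm ?_)
      ring
  -- integrability of U0inf * M entries
  have hUint : ∀ (M : ℝ → Matrix (Fin 2) (Fin 2) ℂ), ContinuousOn M (Ico 0 1) →
      ∀ x ∈ Ico (0:ℝ) 1, ∀ i j : Fin 2,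
        IntervalIntegrable (fun t => (U0inf E0 t * M t) i j) volume 0 x := by
    intro M hM x hx i j
    have hMe : ∀ i j : Fin 2, ContinuousOn (fun t => M t i j) (Ico 0 1) := fun i j =>
      (continuous_apply j).comp_continuousOn ((continuous_apply i).comp_continuousOn hM)
    have hψ : ContinuousOn
        (fun t => (1 / (2 * (((E0 t).re : ℝ) : ℂ))) * (M t 0 j + M t 1 j)) (Ico 0 1) :=
      hqc.mul ((hMe 0 j).add (hMe 1 j))
    simp only [hU_apply]
    rcases eq_or_ne i 0 with hi | hi
    · simp only [hi, if_pos rfl]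
      exact hcd_int _ hψ x hx
    · simp only [if_neg hi]
      exact hd_int _ hψ x hx
  -- part 2 : PsiInf solves the Volterra equation
  have part2 : ∀ x ∈ Ico (0:ℝ) 1, ∀ i j : Fin 2,
      PsiInf E0 x i j = (1 : Matrix (Fin 2) (Fin 2) ℂ) i j +
        ∫ t in (0:ℝ)..x, (U0inf E0 t * PsiInf E0 t) i j := by
    intro x hx i j
    have hEqOn : EqOn (fun t => (U0inf E0 t * PsiInf E0 t) i j)
        (fun t => (if i = 0 then conj (deriv E0 t) else deriv E0 t) * (1/2 : ℂ))
        (Set.uIcc 0 x) := by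
      intro t ht
      rw [uIcc_of_le hx.1] at ht
      have htm := hsubIcc hx ht
      simp only [hU_apply, hcol]
      congr 1
      have := hrneC t htm
      field_simp
    rw [intervalIntegral.integral_congr hEqOn]
    have hFc : ContinuousOn (fun t : ℝ => PsiInf E0 t i j) (Icc 0 x) :=
      (hPec i j).mono (hsubIcc hx)
    have hFint : IntervalIntegrable
        (fun t => (if i = 0 then conj (deriv E0 t) else deriv E0 t) * (1/2 : ℂ)) volume 0 x := by
      rcases eq_or_ne i 0 with hi | hi
      · simp only [hi, if_pos rfl]
        exact hcd_int _ continuousOn_const x hx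
      · simp only [if_neg hi]
        exact hd_int _ continuousOn_const x hx
    have hFTC := intervalIntegral.integral_eq_sub_of_hasDeriv_right_of_le hx.1 hFc
      (fun t ht => (hPder i j t ⟨ht.1, lt_trans ht.2 hx.2⟩).hasDerivWithinAt) hFint
    rw [hFTC, hpsi0]
    ring
  refine ⟨⟨hPc, part2⟩, ?_⟩
  -- uniqueness
  intro Ψ hΨc hΨeq x hx
  have hΨe : ∀ i j : Fin 2, ContinuousOn (fun t : ℝ => Ψ t i j) (Ico 0 1) := fun i j =>
    (continuous_apply j).comp_continuousOn ((continuous_apply i).comp_continuousOn hΨc)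
  set S : Fin 2 → ℝ → ℂ := fun j t =>
    Ψ t 0 j + Ψ t 1 j - (PsiInf E0 t 0 j + PsiInf E0 t 1 j) with hS
  have hSc : ∀ j, ContinuousOn (S j) (Ico 0 1) := fun j =>
    ((hΨe 0 j).add (hΨe 1 j)).sub ((hPec 0 j).add (hPec 1 j))
  have hψSc : ∀ j, ContinuousOn
      (fun t => (1 / (2 * (((E0 t).re : ℝ) : ℂ))) * S j t) (Ico 0 1) := fun j =>
    hqc.mul (hSc j)
  have hΔ : ∀ y ∈ Ico (0:ℝ) 1, ∀ i j : Fin 2, Ψ y i j - PsiInf E0 y i j =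
      ∫ t in (0:ℝ)..y, (if i = 0 then conj (deriv E0 t) else deriv E0 t) *
        ((1 / (2 * (((E0 t).re : ℝ) : ℂ))) * S j t) := by
    intro y hy i j
    rw [hΨeq y hy i j, part2 y hy i j, add_sub_add_left_eq_sub,
      ← intervalIntegral.integral_sub (hUint Ψ hΨc y hy i j)
        (hUint (fun t => PsiInf E0 t) hPc y hy i j)]
    refine intervalIntegral.integral_congr fun t _ => ?_
    simp only [hU_apply, hS]
    ring
  have hSint : ∀ j, ∀ y ∈ Ico (0:ℝ) 1, S j y = ∫ t in (0:ℝ)..y,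
      (conj (deriv E0 t) + deriv E0 t) * ((1 / (2 * (((E0 t).re : ℝ) : ℂ))) * S j t) := by
    intro j y hy
    have h0 : S j y = (Ψ y 0 j - PsiInf E0 y 0 j) + (Ψ y 1 j - PsiInf E0 y 1 j) := by
      rw [hS] ; ring
    rw [h0, hΔ y hy 0 j, hΔ y hy 1 j]
    have e0 : ∀ t : ℝ, (if (0:Fin 2) = 0 then conj (deriv E0 t) else deriv E0 t)
        = conj (deriv E0 t) := fun t => if_pos rfl
    have e1 : ∀ t : ℝ, (if (1:Fin 2) = 0 then conj (deriv E0 t) else deriv E0 t)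
        = deriv E0 t := fun t => if_neg (by decide)
    simp only [e0, e1, if_true, ite_true]
    rw [← intervalIntegral.integral_add (hcd_int _ (hψSc j) y hy) (hd_int _ (hψSc j) y hy)]
    exact intervalIntegral.integral_congr fun t _ => by ring
  have hS0 : ∀ j, S j 0 = 0 := by
    intro j
    have h0 : ∀ i j : Fin 2, Ψ 0 i j = (1 : Matrix (Fin 2) (Fin 2) ℂ) i j := by
      intro i j
      rw [hΨeq 0 (left_mem_Ico.2 one_pos) i j, intervalIntegral.integral_same, add_zero]
    simp only [hS, h0, hpsi0]
    ring
  have hSzero : ∀ j, ∀ y ∈ Ico (0:ℝ) 1, S j y = 0 := by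
    intro j
    set w : ℝ → ℂ := fun t => S j t / (((E0 t).re : ℝ) : ℂ) with hw
    have hwc : ContinuousOn w (Ico 0 1) := (hSc j).div hrc hrneC
    have hwd : ∀ y ∈ Ioo (0:ℝ) 1, HasDerivAt w 0 y := by
      intro y hy
      have hym : y ∈ Ico (0:ℝ) 1 := ⟨hy.1.le, hy.2⟩
      -- derivative of S j
      have hhc : ContinuousOn (fun t => (conj (deriv E0 t) + deriv E0 t) *
          ((1 / (2 * (((E0 t).re : ℝ) : ℂ))) * S j t)) (Ioo 0 1) := by
        refine ContinuousOn.mul ?_ ((hψSc j).mono Ioo_subset_Ico_self)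
        exact (continuous_star.comp_continuousOn hdc).add hdc
      have hint : IntervalIntegrable (fun t => (conj (deriv E0 t) + deriv E0 t) *
          ((1 / (2 * (((E0 t).re : ℝ) : ℂ))) * S j t)) volume 0 y := by
        have h12 := (hcd_int _ (hψSc j) y hym).add (hd_int _ (hψSc j) y hym)
        rw [intervalIntegrable_iff] at h12 ⊢
        exact h12.congr_fun (fun t _ => by ring) measurableSet_uIoc
      have hSd : HasDerivAt (S j) ((conj (deriv E0 y) + deriv E0 y) *
          ((1 / (2 * (((E0 y).re : ℝ) : ℂ))) * S j y)) y := by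
        have hG := intervalIntegral.integral_hasDerivAt_right hint
          (hhc.stronglyMeasurableAtFilter isOpen_Ioo y hy)
          (hhc.continuousAt (isOpen_Ioo.mem_nhds hy))
        refine hG.congr_of_eventuallyEq ?_
        filter_upwards [isOpen_Ioo.mem_nhds hy] with u hu
        exact hSint j u ⟨hu.1.le, hu.2⟩
      have hrd : HasDerivAt (fun t : ℝ => (((E0 t).re : ℝ) : ℂ)) (((deriv E0 y).re : ℝ) : ℂ) y := by
        have := (Complex.ofRealCLM.comp Complex.reCLM).hasFDerivAt.comp_hasDerivAt y (hder y hy)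
        simpa [Function.comp_def] using this
      have hne0 : (((E0 y).re : ℝ) : ℂ) ≠ 0 := hrneC y hym
      have hdiv := hSd.div hrd hne0
      simp only [hw]
      refine hdiv.congr_deriv (Eq.symm ?_)
      have h2 : conj (deriv E0 y) + deriv E0 y = 2 * (((deriv E0 y).re : ℝ) : ℂ) := by
        rw [add_comm, Complex.add_conj] ; push_cast ; ring
      rw [h2]
      field_simp
      ring
    intro y hy
    have hconst := const_of_deriv_zero hwc hwd y hy
    have hw0 : w 0 = 0 := by
      simp only [hw, hS0 j]
      simp
    have hy0 : w y = 0 := by rw [hconst, hw0]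
    simp only [hw] at hy0
    exact (div_eq_zero_iff.1 hy0).resolve_right (hrneC y hy)
  -- conclude
  ext i j
  have h := hΔ x hx i j
  have hzero : EqOn (fun t => (if i = 0 then conj (deriv E0 t) else deriv E0 t) *
      ((1 / (2 * (((E0 t).re : ℝ) : ℂ))) * S j t)) 0 (Set.uIcc 0 x) := by
    intro t ht
    rw [uIcc_of_le hx.1] at ht
    have hst : S j t = 0 := hSzero j t (hsubIcc hx ht)
    simp [hst]
  rw [intervalIntegral.integral_congr hzero] at h
  simp only [Pi.zero_apply, intervalIntegral.integral_zero] at h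
  exact sub_eq_zero.1 h
end
end

section
/- Let n ≥ 2 be an integer and α ∈ [0,1), and let ℰ0 : [0,1) → ℂ satisfy: ℰ0 ∈ C([0,1)) ∩ C^n((0,1)); x^α ℰ0'(x) extends continuously to [0,1); ℰ0(0) = 1; Re ℰ0 > 0 on [0,1). For each k ∈ ℂ ∖ [0,1], let Φ0(·,k) be the unique continuous solution of the Volterra equation Φ0(x,k) = I + ∫_0^x U0(x',k) Φ0(x',k) dx', where U0(x,k) = (1/(2 Re ℰ0(x))) [[conj(ℰ0'(x)), λ(x,0,k) conj(ℰ0'(x))],[λ(x,0,k) ℰ0'(x), ℰ0'(x)]]. Then det Φ0(x,k) = Re ℰ0(x) for all x ∈ [0,1) and all k ∈ ℂ ∖ [0,1]. -/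
open Complex Set MeasureTheory Topology Filter ComplexConjugate

noncomputable section

section VolterraAux

lemma vx_k_ne {k : ℂ} (hk : k ∉ seg01) {x : ℝ} (hx : x ∈ Icc (0:ℝ) 1) : k - (x:ℂ) ≠ 0 := by
  intro h
  exact hk ⟨x, hx, by linear_combination -h⟩

lemma vx_slit {k : ℂ} (hk : k ∉ seg01) {x : ℝ} (hx : x ∈ Ico (0:ℝ) 1) :
    (k - 1) / (k - (x:ℂ)) ∈ Complex.slitPlane := by
  have hne : k - (x:ℂ) ≠ 0 := vx_k_ne hk ⟨hx.1, hx.2.le⟩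
  have hnsq : 0 < Complex.normSq (k - (x:ℂ)) := by rwa [Complex.normSq_pos]
  rcases eq_or_ne k.im 0 with him | him
  · left
    have hre : k.re ∉ Icc (0:ℝ) 1 := by
      intro h
      exact hk ⟨k.re, h, by apply Complex.ext <;> simp [him]⟩
    rw [Complex.div_re]
    have h1 : (k-1).im = 0 := by simp [him]
    have h2 : (k-(x:ℂ)).im = 0 := by simp [him]
    rw [h1, h2, mul_zero, zero_div, add_zero]
    apply div_pos _ hnsq
    have h3 : (k-1).re = k.re - 1 := by simp
    have h4 : (k-(x:ℂ)).re = k.re - x := by simp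
    rw [h3, h4]
    rcases lt_or_ge k.re 0 with h | h
    · exact mul_pos_of_neg_of_neg (by linarith) (by linarith [hx.1])
    · have h' : 1 < k.re := by
        by_contra h'
        exact hre ⟨h, by linarith⟩
      exact mul_pos (by linarith) (by linarith [hx.2])
  · right
    rw [Complex.div_im]
    have h1 : (k-1).im = k.im := by simp
    have h2 : (k-(x:ℂ)).im = k.im := by simp
    have h3 : (k-1).re = k.re - 1 := by simp
    have h4 : (k-(x:ℂ)).re = k.re - x := by simp
    rw [h1, h2, h3, h4, div_sub_div_same]
    have : k.im * (k.re - x) - (k.re - 1) * k.im = k.im * (1 - x) := by ring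
    rw [this]
    exact div_ne_zero (mul_ne_zero him (by linarith [hx.2])) hnsq.ne'

lemma vx_lam_eq (x : ℝ) (k : ℂ) : lam x 0 k = ((k-1)/(k - (x:ℂ)))^(1/2:ℂ) := by
  simp [lam]

lemma vx_lam_contAt {k : ℂ} (hk : k ∉ seg01) {x : ℝ} (hx : x ∈ Ico (0:ℝ) 1) :
    ContinuousAt (fun t : ℝ => lam t 0 k) x := by
  have h1 : ContinuousAt (fun t : ℝ => (k-1)/(k-(t:ℂ))) x :=
    ContinuousAt.div continuousAt_const
      (ContinuousAt.sub continuousAt_const Complex.continuous_ofReal.continuousAt)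
      (vx_k_ne hk ⟨hx.1, hx.2.le⟩)
  have h2 : ContinuousAt ((fun z : ℂ => z ^ (1/2:ℂ)) ∘ (fun t : ℝ => (k-1)/(k-(t:ℂ)))) x :=
    ContinuousAt.comp (continuousAt_cpow_const (vx_slit hk hx)) h1
  have h3 : (fun t : ℝ => lam t 0 k) = fun t : ℝ => ((k-1)/(k-(t:ℂ)))^(1/2:ℂ) :=
    funext fun t => vx_lam_eq t k
  rw [h3]
  exact h2

lemma vx_entry_cont {s : Set ℝ} (c d l : ℝ → ℂ) (Φ : ℝ → Matrix (Fin 2) (Fin 2) ℂ)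
    (hc : ContinuousOn c s) (hd : ContinuousOn d s) (hl : ContinuousOn l s)
    (hΦ : ∀ i j, ContinuousOn (fun t => Φ t i j) s) (i j : Fin 2) :
    ContinuousOn
      (fun t => ((c t • !![conj (d t), l t * conj (d t); l t * d t, d t]) * Φ t) i j) s := by
  have hdc : ContinuousOn (fun t => conj (d t)) s := Complex.continuous_conj.comp_continuousOn hd
  have hM : ∀ i j : Fin 2, ContinuousOn
      (fun t => (!![conj (d t), l t * conj (d t); l t * d t, d t] :
        Matrix (Fin 2) (Fin 2) ℂ) i j) s := by
    intro i j
    fin_cases i <;> fin_cases j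
    · simpa using hdc
    · simp; exact hl.mul hdc
    · simp; exact hl.mul hd
    · simpa using hd
  simp only [Matrix.mul_apply, Fin.sum_univ_two, Matrix.smul_apply, smul_eq_mul]
  exact ((hc.mul (hM i 0)).mul (hΦ 0 j)).add ((hc.mul (hM i 1)).mul (hΦ 1 j))

lemma vx_det_deriv_eq (U Φ : Matrix (Fin 2) (Fin 2) ℂ) :
    (U * Φ) 0 0 * Φ 1 1 + Φ 0 0 * ((U * Φ) 1 1) -
      ((U * Φ) 0 1 * Φ 1 0 + Φ 0 1 * ((U * Φ) 1 0)) = (U 0 0 + U 1 1) * Φ.det := by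
  simp only [Matrix.mul_apply, Fin.sum_univ_two, Matrix.det_fin_two]
  ring

lemma vx_re_deriv {f : ℝ → ℂ} {d : ℂ} {x : ℝ} (hf : HasDerivAt f d x) :
    HasDerivAt (fun t => ((f t).re : ℂ)) ((d.re : ℂ)) x := by
  have h := ((Complex.ofRealCLM.comp Complex.reCLM).hasFDerivAt).comp_hasDerivAt x hf
  simp [Function.comp] at h; exact h

lemma vx_trace (E0 : ℝ → ℂ) (x : ℝ) (k : ℂ) (hr : (E0 x).re ≠ 0) :
    U0mat E0 x k 0 0 + U0mat E0 x k 1 1 = ((deriv E0 x).re : ℂ) / ((E0 x).re : ℂ) := by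
  have hrc : ((E0 x).re : ℂ) ≠ 0 := Complex.ofReal_ne_zero.mpr hr
  simp only [U0mat, Matrix.smul_apply, smul_eq_mul, Matrix.cons_val', Matrix.cons_val_zero,
    Matrix.cons_val_one, Matrix.head_cons, Matrix.empty_val', Matrix.cons_val_fin_one,
    Matrix.head_fin_const, Matrix.of_apply]
  have h2 : deriv E0 x + conj (deriv E0 x) = 2 * ((deriv E0 x).re : ℂ) :=
    by push_cast [Complex.add_conj]; ring
  field_simp
  linear_combination h2


lemma vx_rel (a : ℝ) (c d l : ℂ) (Φ : Matrix (Fin 2) (Fin 2) ℂ) (i j : Fin 2) :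
    ((c • !![conj ((a:ℂ) * d), l * conj ((a:ℂ) * d); l * ((a:ℂ) * d), (a:ℂ) * d]) * Φ) i j =
      (a:ℂ) * (((c • !![conj d, l * conj d; l * d, d]) * Φ) i j) := by
  simp only [map_mul, Complex.conj_ofReal, Matrix.mul_apply, Fin.sum_univ_two,
    Matrix.smul_apply, smul_eq_mul]
  fin_cases i <;> fin_cases j <;> simp <;> ring

end VolterraAux

/-- The determinant of the eigenfunction Φ0 of the x-part of the Lax pair
equals Re ℰ0(x). -/
theorem volterra_xpart_det
    (n : ℕ) (hn : 2 ≤ n) (α : ℝ) (hα : α ∈ Ico (0:ℝ) 1)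
    (E0 : ℝ → ℂ) (hd0 : ErnstData n α E0)
    (k : ℂ) (hk : k ∉ seg01)
    (Φ0 : ℝ → Matrix (Fin 2) (Fin 2) ℂ)
    (hΦc : ContinuousOn Φ0 (Ico 0 1))
    (hΦeq : ∀ x ∈ Ico (0:ℝ) 1, ∀ i j, Φ0 x i j =
      (1 : Matrix (Fin 2) (Fin 2) ℂ) i j + ∫ t in (0:ℝ)..x, (U0mat E0 t k * Φ0 t) i j) :
    ∀ x ∈ Ico (0:ℝ) 1, (Φ0 x).det = ((E0 x).re : ℂ) := by
  obtain ⟨hE0c, hE0d, ⟨g, hgc, hgeq⟩, hE00, hE0re⟩ := hd0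
  have hsub : Ioo (0:ℝ) 1 ⊆ Ico 0 1 := Ioo_subset_Ico_self
  have hrne : ∀ t ∈ Ico (0:ℝ) 1, ((E0 t).re : ℂ) ≠ 0 := fun t ht =>
    Complex.ofReal_ne_zero.mpr (hE0re t ht).ne'
  have hcinv : ContinuousOn (fun t => 1 / (2 * ((E0 t).re : ℂ))) (Ico 0 1) := by
    apply ContinuousOn.div continuousOn_const
    · exact continuousOn_const.mul
        ((Complex.continuous_ofReal.comp Complex.continuous_re).comp_continuousOn hE0c)
    · exact fun t ht => mul_ne_zero two_ne_zero (hrne t ht)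
  have hlamc : ContinuousOn (fun t => lam t 0 k) (Ico 0 1) := fun t ht =>
    (vx_lam_contAt hk ht).continuousWithinAt
  have hPhij : ∀ i j, ContinuousOn (fun t => Φ0 t i j) (Ico 0 1) := fun i j =>
    (continuous_id.matrix_elem i j).comp_continuousOn hΦc
  have hone : (1 : WithTop ℕ∞) ≤ (n : WithTop ℕ∞) := by exact_mod_cast (by omega : 1 ≤ n)
  have hderivc : ContinuousOn (deriv E0) (Ioo 0 1) :=
    hE0d.continuousOn_deriv_of_isOpen isOpen_Ioo hone
  have hFc : ∀ i j, ContinuousOn (fun t => (U0mat E0 t k * Φ0 t) i j) (Ioo 0 1) := by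
    intro i j
    have := vx_entry_cont (fun t => 1 / (2 * ((E0 t).re : ℂ))) (deriv E0)
      (fun t => lam t 0 k) Φ0 (hcinv.mono hsub) hderivc (hlamc.mono hsub)
      (fun i j => (hPhij i j).mono hsub) i j
    simpa [U0mat] using this
  set Hm : ℝ → Matrix (Fin 2) (Fin 2) ℂ := fun t =>
    ((1 / (2 * ((E0 t).re : ℂ))) • !![conj (g t), lam t 0 k * conj (g t);
      lam t 0 k * g t, g t]) * Φ0 t with hHm
  have hHc : ∀ i j, ContinuousOn (fun t => Hm t i j) (Ico 0 1) := fun i j =>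
    vx_entry_cont _ g _ Φ0 hcinv hgc hlamc hPhij i j
  have hrel : ∀ t ∈ Ioo (0:ℝ) 1, ∀ i j,
      Hm t i j = ((t ^ α : ℝ) : ℂ) * (U0mat E0 t k * Φ0 t) i j := by
    intro t ht i j
    have hg : g t = ((t ^ α : ℝ) : ℂ) * deriv E0 t := hgeq t ht
    rw [hHm]
    simp only [hg, U0mat]
    exact vx_rel (t ^ α) (1 / (2 * ((E0 t).re : ℂ))) (deriv E0 t) (lam t 0 k) (Φ0 t) i j
  have hInt : ∀ x ∈ Ioo (0:ℝ) 1, ∀ i j,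
      IntervalIntegrable (fun t => (U0mat E0 t k * Φ0 t) i j) volume 0 x := by
    intro x hx i j
    have hIccsub : Icc (0:ℝ) x ⊆ Ico 0 1 := fun t ht => ⟨ht.1, lt_of_le_of_lt ht.2 hx.2⟩
    have hIocsub : Ioc (0:ℝ) x ⊆ Ioo 0 1 := fun t ht => ⟨ht.1, lt_of_le_of_lt ht.2 hx.2⟩
    obtain ⟨C, hC⟩ := (isCompact_Icc (a := (0:ℝ)) (b := x)).exists_bound_of_continuousOn
      ((hHc i j).mono hIccsub)
    have hC0 : 0 ≤ C := le_trans (norm_nonneg _) (hC 0 ⟨le_refl 0, hx.1.le⟩)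
    have hint0 : IntervalIntegrable (fun t => C * t ^ (-α)) volume 0 x :=
      (intervalIntegral.intervalIntegrable_rpow'
        (by linarith [hα.2] : (-1:ℝ) < -α)).const_mul C
    apply hint0.mono_fun
    · rw [uIoc_of_le hx.1.le]
      exact ((hFc i j).mono hIocsub).aestronglyMeasurable measurableSet_Ioc
    · rw [uIoc_of_le hx.1.le]
      filter_upwards [ae_restrict_mem measurableSet_Ioc] with t ht
      have ht1 : t ∈ Ioo (0:ℝ) 1 := hIocsub ht
      have h1 : Hm t i j = ((t ^ α : ℝ) : ℂ) * (U0mat E0 t k * Φ0 t) i j := hrel t ht1 i j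
      have htα : (0:ℝ) < t ^ α := Real.rpow_pos_of_pos ht.1 α
      have hne' : ((t ^ α : ℝ) : ℂ) ≠ 0 := Complex.ofReal_ne_zero.mpr htα.ne'
      have h2 : (U0mat E0 t k * Φ0 t) i j = ((t ^ (-α) : ℝ) : ℂ) * Hm t i j := by
        rw [h1, Real.rpow_neg ht.1.le]
        push_cast
        rw [← mul_assoc, inv_mul_cancel₀ hne', one_mul]
      rw [h2, norm_mul]
      have h3 : ‖(((t ^ (-α) : ℝ)) : ℂ)‖ = t ^ (-α) := by
        rw [Complex.norm_real, Real.norm_eq_abs, _root_.abs_of_nonneg (Real.rpow_nonneg ht.1.le _)]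
      rw [h3]
      calc t ^ (-α) * ‖Hm t i j‖ ≤ t ^ (-α) * C :=
            mul_le_mul_of_nonneg_left (hC t ⟨ht.1.le, ht.2⟩) (Real.rpow_nonneg ht.1.le _)
        _ ≤ ‖C * t ^ (-α)‖ := by
            rw [Real.norm_eq_abs, _root_.abs_of_nonneg (mul_nonneg hC0 (Real.rpow_nonneg ht.1.le _))]
            exact le_of_eq (mul_comm _ _)
  have hEntryDeriv : ∀ x0 ∈ Ioo (0:ℝ) 1, ∀ i j,
      HasDerivAt (fun u => Φ0 u i j) ((U0mat E0 x0 k * Φ0 x0) i j) x0 := by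
    intro x0 hx0 i j
    have hftc := intervalIntegral.integral_hasDerivAt_right (hInt x0 hx0 i j)
      ((hFc i j).stronglyMeasurableAtFilter isOpen_Ioo x0 hx0)
      ((hFc i j).continuousAt (isOpen_Ioo.mem_nhds hx0))
    have h2 := HasDerivAt.const_add ((1 : Matrix (Fin 2) (Fin 2) ℂ) i j) hftc
    apply h2.congr_of_eventuallyEq
    filter_upwards [isOpen_Ioo.mem_nhds hx0] with u hu
    exact hΦeq u (hsub hu) i j
  have hdetDeriv : ∀ x0 ∈ Ioo (0:ℝ) 1,
      HasDerivAt (fun u => (Φ0 u).det)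
        ((U0mat E0 x0 k 0 0 + U0mat E0 x0 k 1 1) * (Φ0 x0).det) x0 := by
    intro x0 hx0
    have hA := (hEntryDeriv x0 hx0 0 0).mul (hEntryDeriv x0 hx0 1 1)
    have hB := (hEntryDeriv x0 hx0 0 1).mul (hEntryDeriv x0 hx0 1 0)
    have hC := hA.sub hB
    have hfun : (fun u => (Φ0 u).det) =
        (fun u => Φ0 u 0 0 * Φ0 u 1 1 - Φ0 u 0 1 * Φ0 u 1 0) :=
      funext fun u => Matrix.det_fin_two (Φ0 u)
    rw [hfun, ← vx_det_deriv_eq (U0mat E0 x0 k) (Φ0 x0)]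
    exact hC
  have hzero : ∀ x0 ∈ Ioo (0:ℝ) 1,
      HasDerivAt (fun u => (Φ0 u).det / ((E0 u).re : ℂ)) 0 x0 := by
    intro x0 hx0
    have hrne0 : ((E0 x0).re : ℂ) ≠ 0 := hrne x0 (hsub hx0)
    have hdiff : DifferentiableAt ℝ E0 x0 :=
      (hE0d.differentiableOn (by exact_mod_cast (by omega : n ≠ 0))).differentiableAt (isOpen_Ioo.mem_nhds hx0)
    have hre' := vx_re_deriv hdiff.hasDerivAt
    have hdiv := (hdetDeriv x0 hx0).div hre' hrne0
    rw [vx_trace E0 x0 k (hE0re x0 (hsub hx0)).ne'] at hdiv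
    refine hdiv.congr_deriv ?_
    rw [div_mul_eq_mul_div, div_mul_cancel₀ _ hrne0]
    ring
  have hdetc : ContinuousOn (fun u => (Φ0 u).det) (Ico 0 1) := by
    have hfun : (fun u => (Φ0 u).det) =
        (fun u => Φ0 u 0 0 * Φ0 u 1 1 - Φ0 u 0 1 * Φ0 u 1 0) :=
      funext fun u => Matrix.det_fin_two (Φ0 u)
    rw [hfun]
    exact ((hPhij 0 0).mul (hPhij 1 1)).sub ((hPhij 0 1).mul (hPhij 1 0))
  have hrcC : ContinuousOn (fun u => ((E0 u).re : ℂ)) (Ico 0 1) :=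
    (Complex.continuous_ofReal.comp Complex.continuous_re).comp_continuousOn hE0c
  have hhc : ContinuousOn (fun u => (Φ0 u).det / ((E0 u).re : ℂ)) (Ico 0 1) :=
    hdetc.div hrcC hrne
  have hPhi0 : Φ0 0 = 1 := by
    ext i j
    rw [hΦeq 0 ⟨le_refl 0, one_pos⟩ i j, intervalIntegral.integral_same, add_zero]
  have hre0 : (E0 0).re = 1 := by rw [hE00]; simp
  intro x hx
  rcases eq_or_lt_of_le hx.1 with h0 | h0
  · rw [← h0, hPhi0, Matrix.det_one, hre0]
    norm_num
  · set h : ℝ → ℂ := fun u => (Φ0 u).det / ((E0 u).re : ℂ) with hh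
    have hconst : ∀ ε ∈ Ioc (0:ℝ) x, h x = h ε := by
      intro ε hε
      have hsub2 : Icc ε x ⊆ Ico 0 1 := fun t ht =>
        ⟨le_trans hε.1.le ht.1, lt_of_le_of_lt ht.2 hx.2⟩
      have hder : ∀ t ∈ Ico ε x, HasDerivWithinAt h 0 (Ici t) t := fun t ht =>
        (hzero t ⟨lt_of_lt_of_le hε.1 ht.1, lt_trans ht.2 hx.2⟩).hasDerivWithinAt
      exact (constant_of_has_deriv_right_zero (hhc.mono hsub2) hder x
        (right_mem_Icc.mpr hε.2)).symm ▸ rfl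
    have hIoosub : Ioo (0:ℝ) x ⊆ Ico 0 1 := fun t ht => ⟨ht.1.le, lt_trans ht.2 hx.2⟩
    haveI : (𝓝[Ioo (0:ℝ) x] 0).NeBot := by
      rw [nhdsWithin_Ioo_eq_nhdsGT h0]
      infer_instance
    have hlim1 : Tendsto h (𝓝[Ioo (0:ℝ) x] 0) (𝓝 (h 0)) :=
      ((hhc 0 ⟨le_refl 0, one_pos⟩).mono_left (nhdsWithin_mono 0 hIoosub))
    have hlim2 : Tendsto h (𝓝[Ioo (0:ℝ) x] 0) (𝓝 (h x)) := by
      apply Tendsto.congr' _ tendsto_const_nhds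
      filter_upwards [self_mem_nhdsWithin] with ε hε
      exact hconst ε ⟨hε.1, hε.2.le⟩
    have h0x : h 0 = h x := tendsto_nhds_unique hlim1 hlim2
    have hh0 : h 0 = 1 := by
      rw [hh]
      simp only [hPhi0, Matrix.det_one, hre0]
      norm_num
    have hx1 : h x = 1 := by rw [← h0x, hh0]
    have hrx : ((E0 x).re : ℂ) ≠ 0 := hrne x hx
    rw [hh] at hx1
    field_simp at hx1
    exact hx1
end
end

section
/- Let n ≥ 2 be an integer and α ∈ [0,1). Let V be a C^n-solution of the Goursat problem for the Euler–Darboux equation in D with data {V0, V1}, where V0, V1 ∈ C([0,1)) ∩ C^n((0,1)) are real-valued, x^α V0'(x) and y^α V1'(y) extend continuously to [0,1), and V0(0) = V1(0) = 0. Then for every (x,y) ∈ D, the integrals ∫_0^x V_x(x',0) dx' and ∫_0^y V_y(x,y') dy' converge absolutely and V(x,y) = ∫_0^x V_x(x',0) dx' + ∫_0^y V_y(x,y') dy'. -/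
open Complex Set MeasureTheory Topology Filter ComplexConjugate

noncomputable section

lemma key_ftc (b β : ℝ) (hb : 0 ≤ b) (hβ1 : β < 1)
    (f f' G : ℝ → ℝ) (hf : ContinuousOn f (Icc 0 b))
    (hG : ContinuousOn G (Icc 0 b))
    (hd : ∀ t ∈ Ioo (0:ℝ) b, HasDerivAt f (f' t) t)
    (heq : ∀ t ∈ Ioo (0:ℝ) b, f' t = t ^ (-β) * G t) :
    IntervalIntegrable f' volume 0 b ∧ (∫ t in (0:ℝ)..b, f' t) = f b - f 0 := by
  obtain ⟨C, hC⟩ := (isCompact_Icc).exists_bound_of_continuousOn hG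
  have hrpow : IntervalIntegrable (fun t : ℝ => t ^ (-β)) volume 0 b :=
    intervalIntegral.intervalIntegrable_rpow' (by linarith)
  have hrpowIoo : IntegrableOn (fun t : ℝ => C * t ^ (-β)) (Ioo 0 b) volume :=
    ((intervalIntegrable_iff_integrableOn_Ioo_of_le hb).mp hrpow).const_mul C
  have hmeas : AEStronglyMeasurable (fun t : ℝ => t ^ (-β) * G t)
      (volume.restrict (Ioo 0 b)) := by
    apply ContinuousOn.aestronglyMeasurable _ measurableSet_Ioo
    exact (continuousOn_id.rpow_const (fun t ht => Or.inl (ne_of_gt ht.1))).mul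
      (hG.mono (fun t ht => ⟨le_of_lt ht.1, le_of_lt ht.2⟩))
  have hprod : IntegrableOn (fun t : ℝ => t ^ (-β) * G t) (Ioo 0 b) volume := by
    apply Integrable.mono' hrpowIoo hmeas
    filter_upwards [ae_restrict_mem measurableSet_Ioo] with t ht
    have h1 : (0:ℝ) ≤ t ^ (-β) := Real.rpow_nonneg (le_of_lt ht.1) _
    have h2 : ‖G t‖ ≤ C := hC t ⟨le_of_lt ht.1, le_of_lt ht.2⟩
    calc ‖t ^ (-β) * G t‖ = t ^ (-β) * ‖G t‖ := by
          rw [norm_mul, Real.norm_eq_abs (t ^ (-β)), _root_.abs_of_nonneg h1]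
      _ ≤ t ^ (-β) * C := mul_le_mul_of_nonneg_left h2 h1
      _ = C * t ^ (-β) := mul_comm _ _
  have hf'Ioo : IntegrableOn f' (Ioo 0 b) volume :=
    hprod.congr_fun (fun t ht => (heq t ht).symm) measurableSet_Ioo
  have hint : IntervalIntegrable f' volume 0 b :=
    (intervalIntegrable_iff_integrableOn_Ioo_of_le hb).mpr hf'Ioo
  exact ⟨hint, intervalIntegral.integral_eq_sub_of_hasDeriv_right_of_le hb hf
    (fun t ht => (hd t ht).hasDerivWithinAt) hint⟩

lemma mem_interior_TriD {a b : ℝ} (ha : 0 < a) (hb : 0 < b) (hab : a + b < 1) :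
    (a, b) ∈ interior TriD := by
  have hopen : IsOpen {p : ℝ × ℝ | 0 < p.1 ∧ 0 < p.2 ∧ p.1 + p.2 < 1} := by
    have : {p : ℝ × ℝ | 0 < p.1 ∧ 0 < p.2 ∧ p.1 + p.2 < 1} =
        {p : ℝ × ℝ | 0 < p.1} ∩ ({p : ℝ × ℝ | 0 < p.2} ∩ {p : ℝ × ℝ | p.1 + p.2 < 1}) := by
      ext p; simp [and_assoc]
    rw [this]
    exact (isOpen_lt continuous_const continuous_fst).inter
      ((isOpen_lt continuous_const continuous_snd).inter
        (isOpen_lt (continuous_fst.add continuous_snd) continuous_const))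
  have hsub : {p : ℝ × ℝ | 0 < p.1 ∧ 0 < p.2 ∧ p.1 + p.2 < 1} ⊆ TriD :=
    fun p hp => ⟨le_of_lt hp.1, le_of_lt hp.2.1, hp.2.2⟩
  exact interior_maximal hsub hopen ⟨ha, hb, hab⟩

/-- For a solution of the Euler–Darboux Goursat problem,
V(x,y) = ∫_0^x V_x(x',0) dx' + ∫_0^y V_y(x,y') dy', with absolutely convergent
integrals. -/
theorem eulerDarboux_fundamental_theorem
    (n : ℕ) (hn : 2 ≤ n) (α : ℝ) (hα : α ∈ Ico (0:ℝ) 1)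
    (V0 V1 : ℝ → ℝ) (hd0 : EDData n α V0) (hd1 : EDData n α V1)
    (V : ℝ → ℝ → ℝ) (hV : EDSolution n V V0 V1)
    (x y : ℝ) (hxy : (x, y) ∈ TriD) :
    IntervalIntegrable (fun x' => pdxR V x' 0) volume 0 x ∧
    IntervalIntegrable (fun y' => pdyR V x y') volume 0 y ∧
    V x y = (∫ x' in (0:ℝ)..x, pdxR V x' 0) + ∫ y' in (0:ℝ)..y, pdyR V x y' := by
  obtain ⟨hx0, hy0, hxy1⟩ := hxy
  obtain ⟨β, hβ, hc, hdiff, _, _, ⟨g2, hg2c, hg2⟩, _, hb0, hb1⟩ := hV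
  obtain ⟨hV0c, hV0d, ⟨g0, hg0c, hg0⟩, hV00⟩ := hd0
  obtain ⟨hV1c, hV1d, ⟨g1, hg1c, hg1⟩, hV10⟩ := hd1
  have hx1 : x < 1 := by linarith
  have hy1 : y < 1 := by linarith
  have h1n : (1 : WithTop ℕ∞) ≤ (n : ℕ) := by exact_mod_cast le_trans one_le_two hn
  -- Step A : the x-edge
  have stepA : IntervalIntegrable (fun x' => pdxR V x' 0) volume 0 x ∧
      (∫ x' in (0:ℝ)..x, pdxR V x' 0) = V x 0 - V 0 0 := by
    apply key_ftc x α hx0 hα.2 (fun t => V t 0) _ g0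
    · have hmaps : MapsTo (fun t : ℝ => (t, (0:ℝ))) (Icc 0 x) TriD := by
        intro t ht
        exact ⟨ht.1, le_refl 0, by simpa using lt_of_le_of_lt ht.2 hx1⟩
      exact hc.comp ((continuous_id.prodMk continuous_const).continuousOn) hmaps
    · exact hg0c.mono (fun t ht => ⟨ht.1, lt_of_le_of_lt ht.2 hx1⟩)
    · intro t ht
      have ht1 : t ∈ Ioo (0:ℝ) 1 := ⟨ht.1, lt_trans ht.2 hx1⟩
      have hev : (fun s => V s 0) =ᶠ[𝓝 t] V0 := by
        filter_upwards [isOpen_Ioo.mem_nhds ht1] with s hs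
        exact hb0 s ⟨le_of_lt hs.1, hs.2⟩
      have hdV0 : DifferentiableAt ℝ V0 t :=
        (hV0d.contDiffAt (isOpen_Ioo.mem_nhds ht1)).differentiableAt (lt_of_lt_of_le zero_lt_one h1n).ne'
      have : HasDerivAt (fun s => V s 0) (deriv V0 t) t :=
        hev.hasDerivAt_iff.mpr hdV0.hasDerivAt
      have hder : pdxR V t 0 = deriv V0 t := hev.deriv_eq
      rw [hder]; exact this
    · intro t ht
      have ht1 : t ∈ Ioo (0:ℝ) 1 := ⟨ht.1, lt_trans ht.2 hx1⟩
      have hev : (fun s => V s 0) =ᶠ[𝓝 t] V0 := by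
        filter_upwards [isOpen_Ioo.mem_nhds ht1] with s hs
        exact hb0 s ⟨le_of_lt hs.1, hs.2⟩
      have hder : pdxR V t 0 = deriv V0 t := hev.deriv_eq
      have ht0 : (0:ℝ) < t := ht.1
      rw [hder, hg0 t ht1, ← mul_assoc, ← Real.rpow_add ht0]
      simp
  -- Step B : the y-edge
  have stepB : IntervalIntegrable (fun y' => pdyR V x y') volume 0 y ∧
      (∫ y' in (0:ℝ)..y, pdyR V x y') = V x y - V x 0 := by
    rcases eq_or_lt_of_le hx0 with hx0' | hx0'
    · -- x = 0 : use V1 datum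
      subst hx0'
      apply key_ftc y α hy0 hα.2 (fun t => V 0 t) _ g1
      · have hmaps : MapsTo (fun t : ℝ => ((0:ℝ), t)) (Icc 0 y) TriD := by
          intro t ht
          exact ⟨le_refl 0, ht.1, by simpa using lt_of_le_of_lt ht.2 hy1⟩
        exact hc.comp ((continuous_const.prodMk continuous_id).continuousOn) hmaps
      · exact hg1c.mono (fun t ht => ⟨ht.1, lt_of_le_of_lt ht.2 hy1⟩)
      · intro t ht
        have ht1 : t ∈ Ioo (0:ℝ) 1 := ⟨ht.1, lt_trans ht.2 hy1⟩
        have hev : (fun s => V 0 s) =ᶠ[𝓝 t] V1 := by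
          filter_upwards [isOpen_Ioo.mem_nhds ht1] with s hs
          exact hb1 s ⟨le_of_lt hs.1, hs.2⟩
        have hdV1 : DifferentiableAt ℝ V1 t :=
          (hV1d.contDiffAt (isOpen_Ioo.mem_nhds ht1)).differentiableAt (lt_of_lt_of_le zero_lt_one h1n).ne'
        have : HasDerivAt (fun s => V 0 s) (deriv V1 t) t :=
          hev.hasDerivAt_iff.mpr hdV1.hasDerivAt
        have hder : pdyR V 0 t = deriv V1 t := hev.deriv_eq
        rw [hder]; exact this
      · intro t ht
        have ht1 : t ∈ Ioo (0:ℝ) 1 := ⟨ht.1, lt_trans ht.2 hy1⟩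
        have hev : (fun s => V 0 s) =ᶠ[𝓝 t] V1 := by
          filter_upwards [isOpen_Ioo.mem_nhds ht1] with s hs
          exact hb1 s ⟨le_of_lt hs.1, hs.2⟩
        have hder : pdyR V 0 t = deriv V1 t := hev.deriv_eq
        rw [hder, hg1 t ht1, ← mul_assoc, ← Real.rpow_add ht.1]
        simp
    · -- x > 0 : interior argument
      have hmaps : MapsTo (fun t : ℝ => (x, t)) (Icc 0 y) TriD := by
        intro t ht
        exact ⟨hx0, ht.1, by simp only []; linarith [ht.2]⟩
      apply key_ftc y β hy0 hβ.2 (fun t => V x t) _ (fun t => g2 (x, t))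
      · exact hc.comp ((continuous_const.prodMk continuous_id).continuousOn) hmaps
      · exact hg2c.comp ((continuous_const.prodMk continuous_id).continuousOn) hmaps
      · intro t ht
        have hmem : (x, t) ∈ interior TriD :=
          mem_interior_TriD hx0' ht.1 (by linarith [ht.2])
        have hdV : DifferentiableAt ℝ (fun p : ℝ × ℝ => V p.1 p.2) (x, t) :=
          (hdiff.contDiffAt (isOpen_interior.mem_nhds hmem)).differentiableAt (lt_of_lt_of_le zero_lt_one h1n).ne'
        have h2 : DifferentiableAt ℝ (fun s => V x s) t :=
          hdV.comp t ((differentiableAt_const x).prodMk differentiableAt_id)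
        exact h2.hasDerivAt
      · intro t ht
        have hmem : (x, t) ∈ interior TriD :=
          mem_interior_TriD hx0' ht.1 (by linarith [ht.2])
        have h2 := hg2 (x, t) hmem
        have h3 : g2 (x, t) = t ^ β * pdyR V x t := h2
        rw [h3, ← mul_assoc, ← Real.rpow_add ht.1]
        simp
  refine ⟨stepA.1, stepB.1, ?_⟩
  have hV000 : V 0 0 = 0 := by
    rw [hb0 0 ⟨le_refl 0, one_pos⟩, hV00]
  rw [stepA.2, stepB.2, hV000]
  ring
end
end

section
/- Define ℰ : Int D → ℂ by ℰ(x,y) = (1 + √x √(1−y) + √y √(1−x)) / (1 − √x √(1−y) − √y √(1−x)) (the Khan–Penrose solution). Then √x √(1−y) + √y √(1−x) < 1 for all (x,y) ∈ Int D, so ℰ is well defined, and ℰ satisfies the hyperbolic Ernst equation at every point of Int D; moreover Re ℰ > 0 on Int D, and for each y ∈ [0,1): lim_{x↓0} √x · ℰ_x(x,y) = √(1−y)/(1−√y)², and for each x ∈ [0,1): lim_{y↓0} √y · ℰ_y(x,y) = √(1−x)/(1−√x)². -/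
open Complex Set MeasureTheory Topology Filter ComplexConjugate

noncomputable section

/-- The Khan–Penrose Ernst potential. -/
def KhanPenrose (x y : ℝ) : ℂ :=
  ((1 + (Real.sqrt x * Real.sqrt (1 - y) + Real.sqrt y * Real.sqrt (1 - x)) : ℝ) : ℂ) /
    ((1 - (Real.sqrt x * Real.sqrt (1 - y) + Real.sqrt y * Real.sqrt (1 - x)) : ℝ) : ℂ)


/-! ### Auxiliary material for the Khan–Penrose solution -/

def sF (x y : ℝ) : ℝ := Real.sqrt x * Real.sqrt (1-y) + Real.sqrt y * Real.sqrt (1-x)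
def sxF (x y : ℝ) : ℝ := Real.sqrt (1-y)/(2*Real.sqrt x) - Real.sqrt y/(2*Real.sqrt (1-x))
def sxyF (x y : ℝ) : ℝ :=
  -(1/(4*Real.sqrt x*Real.sqrt (1-y)) + 1/(4*Real.sqrt y*Real.sqrt (1-x)))

lemma sF_nonneg (x y : ℝ) : 0 ≤ sF x y := by
  have h1 := Real.sqrt_nonneg x; have h2 := Real.sqrt_nonneg y
  have h3 := Real.sqrt_nonneg (1-x); have h4 := Real.sqrt_nonneg (1-y)
  unfold sF; positivity

lemma sF_symm (x y : ℝ) : sF x y = sF y x := by unfold sF; ring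

lemma s_lt_one {x y : ℝ} (hx : 0 ≤ x) (hy : 0 ≤ y) (hxy : x + y < 1) : sF x y < 1 := by
  have hx1 : (0:ℝ) ≤ 1 - x := by linarith
  have hy1 : (0:ℝ) ≤ 1 - y := by linarith
  have hA : (0:ℝ) ≤ (1-x)*(1-y) := by positivity
  have hB : (0:ℝ) ≤ x*y := by positivity
  have ha := Real.sq_sqrt hA
  have hb := Real.sq_sqrt hB
  have hab : Real.sqrt (x*y) < Real.sqrt ((1-x)*(1-y)) :=
    Real.sqrt_lt_sqrt hB (by nlinarith)
  have h1 : sF x y ^ 2 < 1 := by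
    have e : sF x y ^ 2 = x*(1-y) + y*(1-x)
        + 2*(Real.sqrt ((1-x)*(1-y)) * Real.sqrt (x*y)) := by
      have e2 : Real.sqrt ((1-x)*(1-y)) * Real.sqrt (x*y)
          = (Real.sqrt x * Real.sqrt (1-y)) * (Real.sqrt y * Real.sqrt (1-x)) := by
        rw [Real.sqrt_mul hx1, Real.sqrt_mul hx]; ring
      unfold sF
      rw [e2]
      have e3 := Real.sq_sqrt hx; have e4 := Real.sq_sqrt hy
      have e5 := Real.sq_sqrt hx1; have e6 := Real.sq_sqrt hy1
      nlinarith [Real.sqrt_nonneg x, Real.sqrt_nonneg y]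
    nlinarith [sq_nonneg (Real.sqrt ((1-x)*(1-y)) - Real.sqrt (x*y)), Real.sqrt_nonneg (x*y)]
  nlinarith [sF_nonneg x y]

lemma KP_eq (x y : ℝ) : KhanPenrose x y = (((1 + sF x y)/(1 - sF x y) : ℝ) : ℂ) := by
  rw [Complex.ofReal_div]; rfl

lemma KP_symm (x y : ℝ) : KhanPenrose x y = KhanPenrose y x := by
  rw [KP_eq, KP_eq, sF_symm]

lemma one_sub_sF_ne {x y : ℝ} (hx : 0 ≤ x) (hy : 0 ≤ y) (hxy : x + y < 1) :
    1 - sF x y ≠ 0 := by have := s_lt_one hx hy hxy; linarith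

lemma hasDerivAt_sqrt_one_sub {x : ℝ} (hx1 : x < 1) :
    HasDerivAt (fun t => Real.sqrt (1-t)) (-(1/(2*Real.sqrt (1-x)))) x := by
  have h : HasDerivAt (fun t : ℝ => 1 - t) (-1) x := by
    simpa using (hasDerivAt_id x).const_sub 1
  have := (Real.hasDerivAt_sqrt (by linarith : 1 - x ≠ 0)).comp x h
  exact this.congr_deriv (by ring)

lemma hasDerivAt_sF (y : ℝ) {x : ℝ} (hx : 0 < x) (hx1 : x < 1) :
    HasDerivAt (fun t => sF t y) (sxF x y) x := by
  have h1 : HasDerivAt (fun t => Real.sqrt t * Real.sqrt (1-y))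
      (1/(2*Real.sqrt x) * Real.sqrt (1-y)) x :=
    (Real.hasDerivAt_sqrt hx.ne').mul_const _
  have h2 : HasDerivAt (fun t => Real.sqrt y * Real.sqrt (1-t))
      (Real.sqrt y * -(1/(2*Real.sqrt (1-x)))) x :=
    (hasDerivAt_sqrt_one_sub hx1).const_mul _
  have h3 := h1.add h2
  have e : 1/(2*Real.sqrt x) * Real.sqrt (1-y) + Real.sqrt y * -(1/(2*Real.sqrt (1-x)))
      = sxF x y := by unfold sxF; ring
  rw [e] at h3; exact h3

lemma hasDerivAt_sFswap (y : ℝ) {x : ℝ} (hx : 0 < x) (hx1 : x < 1) :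
    HasDerivAt (fun t => sxF y t) (sxyF x y) x := by
  have h1 : HasDerivAt (fun t => Real.sqrt (1-t)/(2*Real.sqrt y))
      (-(1/(2*Real.sqrt (1-x)))/(2*Real.sqrt y)) x :=
    (hasDerivAt_sqrt_one_sub hx1).div_const _
  have h2 : HasDerivAt (fun t => Real.sqrt t/(2*Real.sqrt (1-y)))
      ((1/(2*Real.sqrt x))/(2*Real.sqrt (1-y))) x :=
    (Real.hasDerivAt_sqrt hx.ne').div_const _
  have h3 := h1.sub h2
  have e : -(1/(2*Real.sqrt (1-x)))/(2*Real.sqrt y) - (1/(2*Real.sqrt x))/(2*Real.sqrt (1-y))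
      = sxyF x y := by unfold sxyF; ring
  rw [e] at h3
  exact h3

lemma hasDerivAt_KPreal (y : ℝ) {x : ℝ} (hx : 0 < x) (hy : 0 ≤ y) (hxy : x + y < 1) :
    HasDerivAt (fun t => (1 + sF t y)/(1 - sF t y)) (2 * sxF x y / (1 - sF x y)^2) x := by
  have hs := hasDerivAt_sF y hx (by linarith)
  have hne := one_sub_sF_ne hx.le hy hxy
  have h1 : HasDerivAt (fun t => 1 + sF t y) (sxF x y) x := hs.const_add 1
  have h2 : HasDerivAt (fun t => 1 - sF t y) (-sxF x y) x := by simpa using hs.const_sub 1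
  have h3 := h1.div h2 hne
  refine h3.congr_deriv ?_
  field_simp
  ring

lemma hasDerivAt_KP (y : ℝ) {x : ℝ} (hx : 0 < x) (hy : 0 ≤ y) (hxy : x + y < 1) :
    HasDerivAt (fun t => KhanPenrose t y)
      (((2 * sxF x y / (1 - sF x y)^2 : ℝ) : ℂ)) x := by
  have h : (fun t => KhanPenrose t y) = fun t => (((1 + sF t y)/(1 - sF t y) : ℝ) : ℂ) := by
    funext t; exact KP_eq t y
  rw [h]
  exact (hasDerivAt_KPreal y hx hy hxy).ofReal_comp

lemma pdx_KP {x y : ℝ} (hx : 0 < x) (hy : 0 ≤ y) (hxy : x + y < 1) :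
    pdx KhanPenrose x y = ((2 * sxF x y / (1 - sF x y)^2 : ℝ) : ℂ) :=
  (hasDerivAt_KP y hx hy hxy).deriv

lemma pdy_swap (x y : ℝ) : pdy KhanPenrose x y = pdx KhanPenrose y x := by
  unfold pdx pdy
  congr 1
  funext t
  exact KP_symm x t

lemma pdy_KP {x y : ℝ} (hx : 0 ≤ x) (hy : 0 < y) (hxy : x + y < 1) :
    pdy KhanPenrose x y = ((2 * sxF y x / (1 - sF x y)^2 : ℝ) : ℂ) := by
  rw [pdy_swap, pdx_KP hy hx (by linarith), sF_symm y x]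

lemma pdxy_KP {x y : ℝ} (hx : 0 < x) (hy : 0 < y) (hxy : x + y < 1) :
    pdxy KhanPenrose x y =
      ((2 * sxyF x y / (1 - sF x y)^2
        + 4 * sxF x y * sxF y x / (1 - sF x y)^3 : ℝ) : ℂ) := by
  have hne := one_sub_sF_ne hx.le hy.le hxy
  set G : ℝ → ℝ := fun t => 2 * sxF y t / (1 - sF t y)^2 with hG
  have hEv : (fun t => pdy KhanPenrose t y) =ᶠ[𝓝 x] (fun t => ((G t : ℝ) : ℂ)) := by
    have hU : Ioo (0:ℝ) (1-y) ∈ 𝓝 x := Ioo_mem_nhds hx (by linarith)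
    filter_upwards [hU] with t ht
    exact pdy_KP ht.1.le hy (by have := ht.2; linarith)
  have hGd : HasDerivAt G
      (2 * sxyF x y / (1 - sF x y)^2 + 4 * sxF x y * sxF y x / (1 - sF x y)^3) x := by
    have hnum : HasDerivAt (fun t => 2 * sxF y t) (2 * sxyF x y) x :=
      (hasDerivAt_sFswap y hx (by linarith)).const_mul 2
    have hs := hasDerivAt_sF y hx (by linarith)
    have h2 : HasDerivAt (fun t => 1 - sF t y) (-sxF x y) x := by simpa using hs.const_sub 1
    have hden : HasDerivAt (fun t => (1 - sF t y)^2)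
        (2 * (1 - sF x y)^1 * (-sxF x y)) x := h2.pow 2
    have hd : (1 - sF x y)^2 ≠ 0 := pow_ne_zero _ hne
    have h3 := hnum.div hden hd
    refine h3.congr_deriv ?_
    field_simp
    ring
  have hGc : HasDerivAt (fun t => ((G t : ℝ) : ℂ))
      (((2 * sxyF x y / (1 - sF x y)^2 + 4 * sxF x y * sxF y x / (1 - sF x y)^3 : ℝ)) : ℂ) x :=
    hGd.ofReal_comp
  unfold pdxy pdx
  rw [Filter.EventuallyEq.deriv_eq hEv]
  exact hGc.deriv

lemma I1gen (u v p q : ℝ) (hu : 0<u) (hv : 0<v) (hp : 0<p) (hq : 0<q)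
    (hu2 : u^2 + p^2 = 1) (hv2 : v^2 + q^2 = 1) :
    (q/(2*u) - v/(2*p)) + (p/(2*v) - u/(2*q))
      = -(2*(q^2-u^2) * (-(1/(4*u*q)+1/(4*v*p)))) := by
  field_simp
  linear_combination (4*q*u) * hu2 - (4*q*u) * hv2

lemma I2gen (u v p q : ℝ) (hu : 0<u) (hv : 0<v) (hp : 0<p) (hq : 0<q)
    (hu2 : u^2 + p^2 = 1) (hv2 : v^2 + q^2 = 1) :
    (1-(u*q+v*p)^2) * (-(1/(4*u*q)+1/(4*v*p)))
      = -((u*q+v*p) * ((q/(2*u) - v/(2*p)) * (p/(2*v) - u/(2*q)))) := by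
  field_simp
  linear_combination (4*(v*p+u*q)*(v^2+q^2)) * hu2 + (4*(v*p+u*q)) * hv2

lemma combine (s sx sy sxy r : ℝ) (hs : 1 - s ≠ 0) (hr : r ≠ 0)
    (I1 : sx + sy = -(2*r*sxy)) (I2 : (1-s^2)*sxy = -(s*sx*sy)) :
    (1+s)/(1-s) * ((2*sxy/(1-s)^2 + 4*sx*sy/(1-s)^3)
        - (2*sx/(1-s)^2 + 2*sy/(1-s)^2)/(2*r))
      = (2*sx/(1-s)^2) * (2*sy/(1-s)^2) := by
  have hG1 : sx + sy + 2*r*sxy = 0 := by linarith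
  have hG2 : (1-s^2)*sxy + s*sx*sy = 0 := by linarith
  have main : (1+s)/(1-s) * ((2*sxy/(1-s)^2 + 4*sx*sy/(1-s)^3)
        - (2*sx/(1-s)^2 + 2*sy/(1-s)^2)/(2*r))
      - (2*sx/(1-s)^2) * (2*sy/(1-s)^2)
      = 4*((1-s^2)*sxy + s*sx*sy)/(1-s)^4
        - (1+s)*(sx + sy + 2*r*sxy)/(r*(1-s)^3) := by
    field_simp
    ring
  rw [hG1, hG2] at main
  simp at main
  linarith

lemma I1F {x y : ℝ} (hx : 0 < x) (hy : 0 < y) (hxy : x + y < 1) :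
    sxF x y + sxF y x = -(2*(1-x-y) * sxyF x y) := by
  have h1x : (0:ℝ) < 1-x := by linarith
  have h1y : (0:ℝ) < 1-y := by linarith
  have hu := Real.sqrt_pos.2 hx
  have hv := Real.sqrt_pos.2 hy
  have hp := Real.sqrt_pos.2 h1x
  have hq := Real.sqrt_pos.2 h1y
  have hu2 : Real.sqrt x^2 = x := Real.sq_sqrt hx.le
  have hv2 : Real.sqrt y^2 = y := Real.sq_sqrt hy.le
  have hp2 : Real.sqrt (1-x)^2 = 1-x := Real.sq_sqrt h1x.le
  have hq2 : Real.sqrt (1-y)^2 = 1-y := Real.sq_sqrt h1y.le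
  have key := I1gen (Real.sqrt x) (Real.sqrt y) (Real.sqrt (1-x)) (Real.sqrt (1-y))
    hu hv hp hq (by rw [hu2, hp2]; ring) (by rw [hv2, hq2]; ring)
  have hr : Real.sqrt (1-y)^2 - Real.sqrt x^2 = 1-x-y := by rw [hu2, hq2]; ring
  rw [hr] at key
  unfold sxF sxyF
  exact key

lemma I2F {x y : ℝ} (hx : 0 < x) (hy : 0 < y) (hxy : x + y < 1) :
    (1 - sF x y^2) * sxyF x y = -(sF x y * (sxF x y * sxF y x)) := by
  have h1x : (0:ℝ) < 1-x := by linarith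
  have h1y : (0:ℝ) < 1-y := by linarith
  have hu := Real.sqrt_pos.2 hx
  have hv := Real.sqrt_pos.2 hy
  have hp := Real.sqrt_pos.2 h1x
  have hq := Real.sqrt_pos.2 h1y
  have hu2 : Real.sqrt x^2 = x := Real.sq_sqrt hx.le
  have hv2 : Real.sqrt y^2 = y := Real.sq_sqrt hy.le
  have hp2 : Real.sqrt (1-x)^2 = 1-x := Real.sq_sqrt h1x.le
  have hq2 : Real.sqrt (1-y)^2 = 1-y := Real.sq_sqrt h1y.le
  have key := I2gen (Real.sqrt x) (Real.sqrt y) (Real.sqrt (1-x)) (Real.sqrt (1-y))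
    hu hv hp hq (by rw [hu2, hp2]; ring) (by rw [hv2, hq2]; ring)
  unfold sF sxF sxyF
  exact key

lemma ernst_real {x y : ℝ} (hx : 0 < x) (hy : 0 < y) (hxy : x + y < 1) :
    (1 + sF x y)/(1 - sF x y) *
      ((2 * sxyF x y/(1 - sF x y)^2 + 4 * sxF x y * sxF y x/(1 - sF x y)^3)
        - (2 * sxF x y/(1 - sF x y)^2 + 2 * sxF y x/(1 - sF x y)^2)/(2*(1-x-y)))
      = (2 * sxF x y/(1 - sF x y)^2) * (2 * sxF y x/(1 - sF x y)^2) :=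
  combine (sF x y) (sxF x y) (sxF y x) (sxyF x y) (1-x-y)
    (one_sub_sF_ne hx.le hy.le hxy) (by intro h; linarith [h]; )
    (I1F hx hy hxy) (by linear_combination I2F hx hy hxy)

lemma ernst_KP {x y : ℝ} (hx : 0 < x) (hy : 0 < y) (hxy : x + y < 1) :
    ErnstEqAt KhanPenrose x y := by
  unfold ErnstEqAt
  rw [pdx_KP hx hy.le hxy, pdy_KP hx.le hy hxy, pdxy_KP hx hy hxy, KP_eq,
    Complex.ofReal_re]
  have h2 : (2*(1-(x:ℂ)-(y:ℂ))) = ((2*(1-x-y) : ℝ) : ℂ) := by push_cast; ring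
  rw [h2]
  exact_mod_cast ernst_real hx hy hxy

lemma KP_re_pos {x y : ℝ} (hx : 0 ≤ x) (hy : 0 ≤ y) (hxy : x + y < 1) :
    0 < (KhanPenrose x y).re := by
  rw [KP_eq, Complex.ofReal_re]
  have h1 := sF_nonneg x y
  have h2 := s_lt_one hx hy hxy
  apply div_pos <;> linarith

lemma interior_TriD_subset :
    interior TriD ⊆ {p : ℝ × ℝ | 0 < p.1 ∧ 0 < p.2 ∧ p.1 + p.2 < 1} := by
  intro p hp
  obtain ⟨h1, h2, h3⟩ := interior_subset hp
  rw [mem_interior_iff_mem_nhds] at hp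
  obtain ⟨ε, hε, hball⟩ := Metric.mem_nhds_iff.1 hp
  refine ⟨?_, ?_, h3⟩
  · rcases h1.lt_or_eq with h | h
    · exact h
    · exfalso
      have hmem : ((p.1 - ε/2, p.2) : ℝ × ℝ) ∈ TriD := by
        apply hball
        rw [Metric.mem_ball, Prod.dist_eq, Real.dist_eq, Real.dist_eq]
        have e1 : p.1 - ε/2 - p.1 = -(ε/2) := by ring
        have e2 : |(-(ε/2) : ℝ)| = ε/2 := by
          rw [abs_neg]; exact abs_of_pos (by linarith)
        rw [e1, e2, sub_self, abs_zero, max_eq_left (by linarith)]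
        linarith
      have hcon := hmem.1
      simp only at hcon
      linarith
  · rcases h2.lt_or_eq with h | h
    · exact h
    · exfalso
      have hmem : ((p.1, p.2 - ε/2) : ℝ × ℝ) ∈ TriD := by
        apply hball
        rw [Metric.mem_ball, Prod.dist_eq, Real.dist_eq, Real.dist_eq]
        have e1 : p.2 - ε/2 - p.2 = -(ε/2) := by ring
        have e2 : |(-(ε/2) : ℝ)| = ε/2 := by
          rw [abs_neg]; exact abs_of_pos (by linarith)
        rw [e1, e2, sub_self, abs_zero, max_eq_right (by linarith)]
        linarith
      have hcon := hmem.2.1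
      simp only at hcon
      linarith

lemma lim_pdx {y : ℝ} (hy : 0 ≤ y) (hy1 : y < 1) :
    Tendsto (fun x : ℝ => ((Real.sqrt x : ℝ) : ℂ) * pdx KhanPenrose x y) (𝓝[>] 0)
      (𝓝 ((Real.sqrt (1 - y) / (1 - Real.sqrt y) ^ 2 : ℝ) : ℂ)) := by
  have h1y : (0:ℝ) < 1 - y := by linarith
  set F : ℝ → ℝ := fun x =>
    2 * (Real.sqrt (1-y)/2 - Real.sqrt x * Real.sqrt y/(2*Real.sqrt (1-x)))
      / (1 - sF x y)^2 with hF
  have hvlt : Real.sqrt y < 1 := by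
    have h := Real.sqrt_lt_sqrt hy hy1
    rwa [Real.sqrt_one] at h
  have hs0 : sF 0 y = Real.sqrt y := by
    unfold sF; simp [Real.sqrt_zero, Real.sqrt_one]
  have hF0 : F 0 = Real.sqrt (1 - y) / (1 - Real.sqrt y) ^ 2 := by
    rw [hF]; simp [hs0, Real.sqrt_zero]
    ring
  have hcF : ContinuousAt F 0 := by
    have hc1 : Continuous fun x : ℝ => Real.sqrt x := Real.continuous_sqrt
    have hc2 : Continuous fun x : ℝ => Real.sqrt (1-x) :=
      Real.continuous_sqrt.comp (by continuity)
    have hcs : Continuous fun x : ℝ => sF x y := by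
      unfold sF
      exact ((hc1.mul continuous_const).add (continuous_const.mul hc2))
    apply ContinuousAt.div
    · apply ContinuousAt.mul continuousAt_const
      apply ContinuousAt.sub continuousAt_const
      apply ContinuousAt.div
      · exact (hc1.mul continuous_const).continuousAt
      · exact (continuous_const.mul hc2).continuousAt
      · simp [Real.sqrt_one]
    · exact ((continuous_const.sub hcs).pow 2).continuousAt
    · rw [hs0]
      have hpos : (0:ℝ) < 1 - Real.sqrt y := by linarith
      positivity
  have htend : Tendsto (fun x => ((F x : ℝ) : ℂ)) (𝓝[>] (0:ℝ))
      (𝓝 ((Real.sqrt (1 - y) / (1 - Real.sqrt y) ^ 2 : ℝ) : ℂ)) := by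
    have := (Complex.continuous_ofReal.continuousAt.comp hcF).tendsto
    rw [Function.comp, hF0] at this
    exact this.mono_left nhdsWithin_le_nhds
  apply htend.congr'
  have hU : Ioo (0:ℝ) (1-y) ∈ 𝓝[>] (0:ℝ) := Ioo_mem_nhdsGT_of_mem ⟨le_refl 0, by linarith⟩
  filter_upwards [hU] with x hx
  have hx0 : 0 < x := hx.1
  have hxy : x + y < 1 := by have := hx.2; linarith
  have h1x : (0:ℝ) < 1 - x := by linarith
  have hsq : Real.sqrt x ≠ 0 := by positivity
  have hsqp : Real.sqrt (1-x) ≠ 0 := by positivity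
  have hns := one_sub_sF_ne hx0.le hy hxy
  rw [pdx_KP hx0 hy hxy, ← Complex.ofReal_mul]
  congr 1
  rw [hF]
  unfold sxF
  field_simp


/-- The Khan–Penrose potential is well defined on Int D, solves the
hyperbolic Ernst equation there, has positive real part, and has the stated boundary
behavior. -/
theorem khanPenrose_solution :
    (∀ p ∈ interior TriD,
      Real.sqrt p.1 * Real.sqrt (1 - p.2) + Real.sqrt p.2 * Real.sqrt (1 - p.1) < 1) ∧
    (∀ p ∈ interior TriD, ErnstEqAt KhanPenrose p.1 p.2) ∧
    (∀ p ∈ interior TriD, 0 < (KhanPenrose p.1 p.2).re) ∧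
    (∀ y ∈ Ico (0:ℝ) 1,
      Tendsto (fun x : ℝ => ((Real.sqrt x : ℝ) : ℂ) * pdx KhanPenrose x y) (𝓝[>] 0)
        (𝓝 ((Real.sqrt (1 - y) / (1 - Real.sqrt y) ^ 2 : ℝ) : ℂ))) ∧
    (∀ x ∈ Ico (0:ℝ) 1,
      Tendsto (fun y : ℝ => ((Real.sqrt y : ℝ) : ℂ) * pdy KhanPenrose x y) (𝓝[>] 0)
        (𝓝 ((Real.sqrt (1 - x) / (1 - Real.sqrt x) ^ 2 : ℝ) : ℂ))) := by
  refine ⟨?_, ?_, ?_, ?_, ?_⟩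
  · intro p hp
    obtain ⟨h1, h2, h3⟩ := interior_TriD_subset hp
    exact s_lt_one h1.le h2.le h3
  · intro p hp
    obtain ⟨h1, h2, h3⟩ := interior_TriD_subset hp
    exact ernst_KP h1 h2 h3
  · intro p hp
    obtain ⟨h1, h2, h3⟩ := interior_TriD_subset hp
    exact KP_re_pos h1.le h2.le h3
  · intro y hy
    exact lim_pdx hy.1 hy.2
  · intro x hx
    refine (lim_pdx hx.1 hx.2).congr ?_
    intro t
    rw [pdy_swap]
end
end
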